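/- arXiv:2504.20875 — 3 statements merged into one kernel-verified Lean document; each statement's English description precedes it below -/
import Mathlib

section
/- For integers a, b, k with k ≥ b > a ≥ 1, the generating function for partitions in D_{a,b,k} satisfies Σ_{π ∈ D_{a,b,k}} u^{ℓ_a(π)} v^{ℓ_b(π)} q^{|π|} = Σ_{m ≥ 0} u^m q^{k·C(m,2)+ma} / (q^k; q^k)_m · (−u^{−1} v q^{b−a}; q^k)_m = Σ_{h ≥ 0} v^h q^{2k·C(h,2)+bh} / (q^k; q^k)_h · (−u q^{kh+a}; q^k)_∞. -/
/-- The finite q-Pochhammer symbol `(t;q)_n = ∏_{i=0}^{n-1} (1 - t qⁱ)`. -/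
noncomputable def qPoch (t q : ℂ) (n : ℕ) : ℂ := ∏ i ∈ Finset.range n, (1 - t * q ^ i)

/-- The infinite q-Pochhammer symbol `(t;q)_∞ = ∏_{i≥0} (1 - t qⁱ)`. -/
noncomputable def qPochInf (t q : ℂ) : ℂ := ∏' i : ℕ, (1 - t * q ^ i)

/-- The Gaussian binomial coefficient `[A choose B]` in base `q`:
`(q;q)_A / ((q;q)_B (q;q)_{A-B})` for `A ≥ B ≥ 0`, and `0` otherwise. -/
noncomputable def gbinom (q : ℂ) (A B : ℕ) : ℂ :=
  if B ≤ A then qPoch q q A / (qPoch q q B * qPoch q q (A - B)) else 0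

/-- `lcount k c l` is the number of parts of `l` congruent to `c` modulo `k`. -/
def lcount (k c : ℕ) (l : List ℕ) : ℕ := (l.filter (fun x => x % k = c % k)).length

/-- Membership in `D_{a,b,k}`: a partition all of whose parts are `≡ a` or `b (mod k)` and
whose consecutive parts differ by at least `k`, with strict inequality whenever the larger
part is `≡ b (mod k)`. -/
def memD (a b k : ℕ) (l : List ℕ) : Prop :=
  l.Pairwise (· ≥ ·) ∧ (∀ x ∈ l, 0 < x ∧ (x % k = a % k ∨ x % k = b % k)) ∧
    l.Chain' (fun x y => y + k ≤ x ∧ (x % k = b % k → y + k < x))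


set_option linter.unusedSectionVars false


open Finset

section Generic
variable {𝕜 : Type*} [NormedField 𝕜] [CompleteSpace 𝕜]

lemma pi_geom : ∀ (m : ℕ) (x : Fin m → 𝕜), (∀ j, ‖x j‖ < 1) →
    Summable (fun g : Fin m → ℕ => ‖∏ j, (x j) ^ (g j)‖) ∧
    (∑' g : Fin m → ℕ, ∏ j, (x j) ^ (g j)) = ∏ j, (1 - x j)⁻¹ := by
  intro m
  induction m with
  | zero =>
    intro x hx
    haveI : Finite (Fin 0 → ℕ) := Finite.of_subsingleton
    refine ⟨Summable.of_finite, ?_⟩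
    have h0 : ∀ g : Fin 0 → ℕ, (∏ j, (x j) ^ (g j)) = 1 := fun g => by simp
    rw [tsum_congr h0]
    simp [tsum_eq_single (fun i : Fin 0 => (0:ℕ)) (fun b hb => by
      exact absurd (Subsingleton.elim b _) hb)]
  | succ n ih =>
    intro x hx
    obtain ⟨ihs, ihv⟩ := ih (fun j => x j.succ) (fun j => hx j.succ)
    set e : (ℕ × (Fin n → ℕ)) ≃ (Fin (n+1) → ℕ) := Fin.consEquiv (fun _ => ℕ) with he
    have key : ∀ p : ℕ × (Fin n → ℕ),
        (∏ j : Fin (n+1), (x j) ^ ((e p) j)) =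
          (x 0) ^ p.1 * ∏ j : Fin n, (x j.succ) ^ (p.2 j) := by
      intro p
      rw [Fin.prod_univ_succ]
      simp [he, Fin.consEquiv]
    have hf : Summable (fun i : ℕ => ‖(x 0) ^ i‖) := by
      simpa [norm_pow] using summable_geometric_of_lt_one (norm_nonneg (x 0)) (hx 0)
    have hs2 : Summable (fun p : ℕ × (Fin n → ℕ) =>
        ‖(x 0) ^ p.1 * ∏ j : Fin n, (x j.succ) ^ (p.2 j)‖) := by
      have := Summable.mul_of_nonneg hf ihs (fun _ => norm_nonneg _) (fun _ => norm_nonneg _)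
      simpa [norm_mul] using this
    constructor
    · rw [← e.summable_iff]
      apply hs2.congr
      intro p
      simp only [Function.comp_apply, key p]
    · rw [← e.tsum_eq]
      have : ∑' p : ℕ × (Fin n → ℕ), (∏ j : Fin (n+1), (x j) ^ ((e p) j))
          = ∑' p : ℕ × (Fin n → ℕ), ((x 0) ^ p.1 * ∏ j : Fin n, (x j.succ) ^ (p.2 j)) :=
        tsum_congr key
      rw [this, ← tsum_mul_tsum_of_summable_norm hf ihs,
        tsum_geometric_of_norm_lt_one (hx 0), ihv, Fin.prod_univ_succ]

lemma fiber_tsum (m : ℕ) (A : Fin m → Bool → 𝕜) (x : Fin m → 𝕜) (hx : ∀ j, ‖x j‖ < 1) :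
    Summable (fun p : (Fin m → Bool) × (Fin m → ℕ) =>
      ‖(∏ j, A j (p.1 j)) * ∏ j, (x j) ^ (p.2 j)‖) ∧
    ∑' p : (Fin m → Bool) × (Fin m → ℕ), (∏ j, A j (p.1 j)) * ∏ j, (x j) ^ (p.2 j)
      = (∏ j, (A j false + A j true)) * ∏ j, (1 - x j)⁻¹ := by
  obtain ⟨hs, hv⟩ := pi_geom m x hx
  have hA : Summable (fun ε : Fin m → Bool => ‖∏ j, A j (ε j)‖) := Summable.of_finite
  constructor
  · have := Summable.mul_of_nonneg hA hs (fun _ => norm_nonneg _) (fun _ => norm_nonneg _)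
    simpa [norm_mul] using this
  · rw [← tsum_mul_tsum_of_summable_norm hA hs, hv]
    congr 1
    rw [tsum_fintype, ← Fintype.piFinset_univ,
      ← Finset.prod_univ_sum (fun _ => (Finset.univ : Finset Bool)) A]
    exact Finset.prod_congr rfl (fun j _ => by rw [Fintype.sum_bool]; ring)

end Generic



namespace GenD

def b2 : Bool → ℕ := fun e => cond e 1 0

def ctop : List (Bool × ℕ) → ℕ
  | [] => 0
  | (_, f) :: [] => f
  | (_, f) :: (p :: r) => f + (ctop (p :: r) + 1 + b2 p.1)

def gval : List (Bool × ℕ) → ℕ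
  | [] => 0
  | p :: r => ctop (p :: r) + 1 + b2 p.1

lemma ctop_cons (p : Bool × ℕ) (r : List (Bool × ℕ)) :
    ctop (p :: r) = p.2 + gval r := by
  cases r with
  | nil => simp [ctop, gval]
  | cons q t => rfl

variable (a b k : ℕ)

def enc : List (Bool × ℕ) → List ℕ
  | [] => []
  | p :: r => (a + (b - a) * b2 p.1 + k * ctop (p :: r)) :: enc r

def Esum (w : List (Bool × ℕ)) : ℕ := (w.map (fun p => b2 p.1)).sum
def Fsum (w : List (Bool × ℕ)) : ℕ := (w.map (fun p => p.2)).sum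

def Csum : List (Bool × ℕ) → ℕ
  | [] => 0
  | p :: r => ctop (p :: r) + Csum r

section Facts
variable (ha : 1 ≤ a) (hab : a < b) (hbk : b ≤ k)
include ha hab hbk

lemma amod : a % k = a := Nat.mod_eq_of_lt (lt_of_lt_of_le hab hbk)

lemma hne : a % k ≠ b % k := by
  rcases eq_or_lt_of_le hbk with h | h
  · rw [amod a b k ha hab hbk, ← h, Nat.mod_self]; omega
  · rw [amod a b k ha hab hbk, Nat.mod_eq_of_lt h]; omega

lemma valmod (e : Bool) (c : ℕ) :
    (a + (b - a) * b2 e + k * c) % k = (bif e then b % k else a % k) := by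
  rw [Nat.add_mul_mod_self_left]
  cases e with
  | false => simp [b2]
  | true =>
    have : a + (b - a) * b2 true = b := by simp [b2]; omega
    rw [this]; simp

end Facts

lemma enc_length (w : List (Bool × ℕ)) : (enc a b k w).length = w.length := by
  induction w with
  | nil => rfl
  | cons p r ih => simp [enc, ih]

lemma ctop_eq (r : List (Bool × ℕ)) : ∀ p, ctop (p :: r) = p.2 + (Fsum r + r.length + Esum r) := by
  induction r with
  | nil => intro p; simp [ctop_cons, gval, Fsum, Esum]
  | cons q t ih =>
    intro p
    rw [ctop_cons, gval, ih q]
    simp [Fsum, Esum]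
    omega

lemma sum_enc (w : List (Bool × ℕ)) :
    (enc a b k w).sum = w.length * a + (b - a) * Esum w + k * Csum w := by
  induction w with
  | nil => simp [enc, Esum, Csum]
  | cons p r ih =>
    simp only [enc, List.sum_cons, ih, Csum, Esum, List.map_cons, List.length_cons]
    ring



lemma gval_cons (p : Bool × ℕ) (r : List (Bool × ℕ)) :
    gval (p :: r) = ctop (p :: r) + 1 + b2 p.1 := rfl

@[simp] lemma b2_true : b2 true = 1 := rfl
@[simp] lemma b2_false : b2 false = 0 := rfl

lemma b2_le_one (e : Bool) : b2 e ≤ 1 := by cases e <;> simp [b2]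

lemma Esum_le (w : List (Bool × ℕ)) : Esum w ≤ w.length := by
  induction w with
  | nil => simp [Esum]
  | cons p r ih =>
    have := b2_le_one p.1
    simp only [Esum, List.map_cons, List.sum_cons, List.length_cons] at *
    omega

section Facts
variable (ha : 1 ≤ a) (hab : a < b) (hbk : b ≤ k)
include ha hab hbk

lemma step (ε ε' f c' : ℕ) (hε : ε ≤ 1) (hε' : ε' ≤ 1) :
    ((a + (b - a) * ε' + k * c') + k ≤ a + (b - a) * ε + k * (f + (c' + 1 + ε')))
    ∧ (ε = 1 → (a + (b - a) * ε' + k * c') + k < a + (b - a) * ε + k * (f + (c' + 1 + ε'))) := by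
  have h1 : k * (f + (c' + 1 + ε')) = k * f + k * c' + k + k * ε' := by ring
  rw [h1]
  have hε2 : ε = 0 ∨ ε = 1 := by omega
  have hε'2 : ε' = 0 ∨ ε' = 1 := by omega
  have hf : (0:ℕ) ≤ k * f := Nat.zero_le _
  rcases hε2 with rfl | rfl <;> rcases hε'2 with rfl | rfl <;>
    simp only [Nat.mul_zero, Nat.mul_one, Nat.add_zero, Nat.zero_add] <;>
    (generalize k * f = F at *; generalize k * c' = C at *; omega)

lemma chain_enc : ∀ w, (enc a b k w).Chain'
    (fun x y => y + k ≤ x ∧ (x % k = b % k → y + k < x)) := by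
  intro w
  induction w with
  | nil => simp [enc, List.Chain']
  | cons p r ih =>
    cases r with
    | nil => simp [enc, List.Chain']
    | cons p' r' =>
      have hstep := step a b k ha hab hbk (b2 p.1) (b2 p'.1) p.2 (ctop (p' :: r'))
        (b2_le_one p.1) (b2_le_one p'.1)
      have hct : ctop (p :: p' :: r') = p.2 + (ctop (p' :: r') + 1 + b2 p'.1) := by
        rw [ctop_cons, gval_cons]
      have hmod := valmod a b k ha hab hbk p.1 (ctop (p :: p' :: r'))
      rw [show enc a b k (p :: p' :: r')
          = (a + (b - a) * b2 p.1 + k * ctop (p :: p' :: r'))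
            :: (a + (b - a) * b2 p'.1 + k * ctop (p' :: r')) :: enc a b k r' from rfl]
      rw [List.Chain', List.isChain_cons_cons]
      refine ⟨⟨?_, ?_⟩, ih⟩
      · rw [hct]; exact hstep.1
      · intro hxb
        rw [hct]
        apply hstep.2
        cases hp : p.1 with
        | false =>
          exfalso
          rw [hp] at hmod hxb
          simp only [cond_false] at hmod
          exact hne a b k ha hab hbk (by rw [← hmod]; exact hxb)
        | true => simp [b2]
  
lemma mem_enc : ∀ w, ∀ x ∈ enc a b k w, 0 < x ∧ (x % k = a % k ∨ x % k = b % k) := by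
  intro w
  induction w with
  | nil => simp [enc]
  | cons p r ih =>
    intro x hx
    rw [show enc a b k (p :: r)
        = (a + (b - a) * b2 p.1 + k * ctop (p :: r)) :: enc a b k r from rfl] at hx
    rcases List.mem_cons.mp hx with rfl | hx
    · constructor
      · omega
      · rw [valmod a b k ha hab hbk]
        cases p.1 <;> simp
    · exact ih x hx

lemma memD_enc (w : List (Bool × ℕ)) : memD a b k (enc a b k w) := by
  refine ⟨?_, mem_enc a b k ha hab hbk w, chain_enc a b k ha hab hbk w⟩
  have hc := chain_enc a b k ha hab hbk w
  have : (enc a b k w).Chain' (· ≥ ·) := by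
    apply List.IsChain.imp _ hc
    intro x y hxy
    omega
  exact List.isChain_iff_pairwise.mp this

lemma lcount_cons_eq (c z : ℕ) (l : List ℕ) (h : z % k = c % k) :
    lcount k c (z :: l) = lcount k c l + 1 := by
  simp [lcount, List.filter_cons, h]

lemma lcount_cons_ne (c z : ℕ) (l : List ℕ) (h : ¬ (z % k = c % k)) :
    lcount k c (z :: l) = lcount k c l := by
  simp [lcount, List.filter_cons, h]

lemma lcount_b_enc : ∀ w, lcount k b (enc a b k w) = Esum w := by
  intro w
  induction w with
  | nil => simp [enc, lcount, Esum]
  | cons p r ih =>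
    have hmod := valmod a b k ha hab hbk p.1 (ctop (p :: r))
    have hab' : ¬ (a % k = b % k) := hne a b k ha hab hbk
    rw [show enc a b k (p :: r)
        = (a + (b - a) * b2 p.1 + k * ctop (p :: r)) :: enc a b k r from rfl]
    cases hp : p.1 with
    | true =>
      rw [hp] at hmod; simp only [cond_true] at hmod
      rw [lcount_cons_eq a b k ha hab hbk b _ _ hmod, ih]
      simp only [Esum, List.map_cons, List.sum_cons, hp, b2_true]
      omega
    | false =>
      rw [hp] at hmod; simp only [cond_false] at hmod
      rw [lcount_cons_ne a b k ha hab hbk b _ _ (by rw [hmod]; exact hab'), ih]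
      simp only [Esum, List.map_cons, List.sum_cons, hp, b2_false]
      omega

lemma lcount_a_enc : ∀ w, lcount k a (enc a b k w) = w.length - Esum w := by
  intro w
  induction w with
  | nil => simp [enc, lcount, Esum]
  | cons p r ih =>
    have hmod := valmod a b k ha hab hbk p.1 (ctop (p :: r))
    have hab' : ¬ (a % k = b % k) := hne a b k ha hab hbk
    have hle := Esum_le r
    have hb2 := b2_le_one p.1
    rw [show enc a b k (p :: r)
        = (a + (b - a) * b2 p.1 + k * ctop (p :: r)) :: enc a b k r from rfl]
    cases hp : p.1 with
    | true =>
      rw [hp] at hmod; simp only [cond_true] at hmod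
      rw [lcount_cons_ne a b k ha hab hbk a _ _ (by rw [hmod]; exact fun hh => hab' hh.symm), ih]
      simp only [Esum, List.map_cons, List.sum_cons, List.length_cons, hp, b2_true]
      simp only [Esum] at hle
      omega
    | false =>
      rw [hp] at hmod; simp only [cond_false] at hmod
      rw [lcount_cons_eq a b k ha hab hbk a _ _ hmod, ih]
      simp only [Esum, List.map_cons, List.sum_cons, List.length_cons, hp, b2_false]
      simp only [Esum] at hle
      omega

lemma enc_inj : ∀ w w', enc a b k w = enc a b k w' → w = w' := by
  intro w
  induction w with
  | nil =>
    intro w' h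
    cases w' with
    | nil => rfl
    | cons p r => exact absurd h (by simp [enc])
  | cons p r ih =>
    intro w' h
    cases w' with
    | nil => exact absurd h (by simp [enc])
    | cons p' r' =>
      rw [show enc a b k (p :: r)
          = (a + (b - a) * b2 p.1 + k * ctop (p :: r)) :: enc a b k r from rfl,
        show enc a b k (p' :: r')
          = (a + (b - a) * b2 p'.1 + k * ctop (p' :: r')) :: enc a b k r' from rfl] at h
      rw [List.cons.injEq] at h
      obtain ⟨h1, h2⟩ := h
      have hr := ih r' h2
      subst hr
      have e1 := valmod a b k ha hab hbk p.1 (ctop (p :: r))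
      have e2 := valmod a b k ha hab hbk p'.1 (ctop (p' :: r))
      have hmm := hne a b k ha hab hbk
      have h12 : (bif p.1 then b % k else a % k) = (bif p'.1 then b % k else a % k) := by
        rw [← e1, ← e2, h1]
      have hcc : p.1 = p'.1 := by
        cases hp : p.1 <;> cases hp' : p'.1 <;> rw [hp, hp'] at h12 <;>
          simp only [cond_true, cond_false] at h12 <;>
          first
          | rfl
          | exact absurd h12.symm hmm
          | exact absurd h12 hmm
      rw [hcc] at h1
      have hk : 0 < k := by omega
      have hct : ctop (p :: r) = ctop (p' :: r) :=
        Nat.eq_of_mul_eq_mul_left hk (Nat.add_left_cancel h1)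
      rw [ctop_cons, ctop_cons] at hct
      have hf : p.2 = p'.2 := by omega
      have : p = p' := Prod.ext hcc hf
      rw [this]

lemma memD_tail {x : ℕ} {r : List ℕ} (h : memD a b k (x :: r)) : memD a b k r :=
  ⟨h.1.of_cons, fun y hy => h.2.1 y (List.mem_cons_of_mem _ hy), h.2.2.tail⟩

lemma enc_surj : ∀ l, memD a b k l → ∃ w, enc a b k w = l := by
  intro l
  induction l with
  | nil => exact fun _ => ⟨[], rfl⟩
  | cons x r ih =>
    intro h
    obtain ⟨w', hw'⟩ := ih (memD_tail a b k ha hab hbk h)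
    obtain ⟨hpos, hmod⟩ := h.2.1 x (by simp)
    -- express x = a + (b-a)*b2 ε + k*c
    have hxc : ∃ (ε : Bool) (c : ℕ), x = a + (b - a) * b2 ε + k * c := by
      have h1 : k * (x / k) + x % k = x := Nat.div_add_mod x k
      obtain ⟨K, hK⟩ : ∃ K, K = k * (x / k) := ⟨_, rfl⟩
      rcases hmod with hm | hm
      · refine ⟨false, x / k, ?_⟩
        rw [amod a b k ha hab hbk] at hm
        simp only [b2, cond_false, Nat.mul_zero, Nat.add_zero]
        rw [← hK] at h1 ⊢
        omega
      · rcases eq_or_lt_of_le hbk with hbe | hbl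
        · -- b = k
          subst hbe
          rw [Nat.mod_self] at hm
          rw [← hK] at h1
          have h2 : K = x := by omega
          have hdpos : 0 < x / b := by
            rcases Nat.eq_zero_or_pos (x / b) with h0 | h0
            · rw [h0, Nat.mul_zero] at hK; omega
            · exact h0
          obtain ⟨d, hd⟩ : ∃ d, x / b = d + 1 := ⟨x / b - 1, by omega⟩
          refine ⟨true, d, ?_⟩
          simp only [b2, cond_true, Nat.mul_one]
          rw [hd] at hK
          have h3 : b * (d + 1) = b * d + b := by ring
          rw [h3] at hK
          obtain ⟨K', hK'⟩ : ∃ K', K' = b * d := ⟨_, rfl⟩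
          rw [← hK'] at hK ⊢
          omega
        · rw [Nat.mod_eq_of_lt hbl] at hm
          refine ⟨true, x / k, ?_⟩
          simp only [b2, cond_true, Nat.mul_one]
          rw [← hK] at h1 ⊢
          omega
    obtain ⟨ε, c, hxc⟩ := hxc
    -- show gval w' ≤ c
    have hg : gval w' ≤ c := by
      cases w'2 : w' with
      | nil => simp [gval]
      | cons p' r' =>
        rw [w'2] at hw'
        rw [show enc a b k (p' :: r')
            = (a + (b - a) * b2 p'.1 + k * ctop (p' :: r')) :: enc a b k r' from rfl] at hw'
        have hhead : r = (a + (b - a) * b2 p'.1 + k * ctop (p' :: r')) :: enc a b k r' := hw'.symm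
        -- chain' head condition
        have hch := h.2.2
        rw [hhead] at hch
        have hrel := (List.isChain_cons_cons.mp hch).1
        obtain ⟨hle, hlt⟩ := hrel
        rw [gval_cons]
        set c' := ctop (p' :: r') with hc'
        -- from hle : (a + (b-a)*b2 p'.1 + k*c') + k ≤ x = a + (b-a)*b2 ε + k*c
        rw [hxc] at hle hlt
        have hmodx := valmod a b k ha hab hbk ε c
        have hb2 := b2_le_one p'.1
        have hb2e := b2_le_one ε
        have hbak : b - a < k := by omega
        obtain ⟨C, hC⟩ : ∃ C, C = k * c := ⟨_, rfl⟩
        obtain ⟨C', hC'⟩ : ∃ C', C' = k * c' := ⟨_, rfl⟩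
        cases hp' : p'.1 with
        | false =>
          simp only [hp', b2, cond_false, Nat.mul_zero, Nat.add_zero] at hle hlt ⊢
          -- need c' + 1 + 0 ≤ c  i.e. c' < c
          have : k * c' < k * c := by
            cases hε : ε with
            | false =>
              rw [hε] at hle; simp [b2] at hle
              omega
            | true =>
              rw [hε] at hle; simp [b2] at hle
              omega
          have := Nat.lt_of_mul_lt_mul_left this
          omega
        | true =>
          simp only [hp', b2, cond_true, Nat.mul_one] at hle hlt ⊢
          -- need c' + 1 + 1 ≤ c, i.e. c' + 1 < c
          have hkc : k * (c' + 1) < k * c := by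
            have hkc1 : k * (c' + 1) = k * c' + k := by ring
            cases hε : ε with
            | false =>
              rw [hε] at hle; simp [b2] at hle
              omega
            | true =>
              rw [hε] at hlt; simp [b2] at hlt
              have := hlt (by simpa [b2] using (valmod a b k ha hab hbk true c))
              omega
          have := Nat.lt_of_mul_lt_mul_left hkc
          omega
    refine ⟨(ε, c - gval w') :: w', ?_⟩
    rw [show enc a b k ((ε, c - gval w') :: w')
        = (a + (b - a) * b2 ε + k * ctop ((ε, c - gval w') :: w')) :: enc a b k w' from rfl]
    rw [hw', ctop_cons]
    simp only []
    have : c - gval w' + gval w' = c := Nat.sub_add_cancel hg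
    rw [this, ← hxc]

end Facts

end GenD

-- PARTC --

namespace GenD
open Finset

lemma qPoch_eq (Q : ℂ) (m : ℕ) :
    qPoch Q Q m = ∏ i ∈ Finset.range m, (1 - Q ^ (i + 1)) := by
  unfold qPoch
  refine Finset.prod_congr rfl fun i _ => ?_
  rw [← pow_succ']

lemma qPoch_ne_zero {Q : ℂ} (hQ : ‖Q‖ < 1) (m : ℕ) : qPoch Q Q m ≠ 0 := by
  rw [qPoch_eq, Finset.prod_ne_zero_iff]
  intro i _ h
  rw [sub_eq_zero] at h
  have h2 : ‖Q ^ (i + 1)‖ < 1 := by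
    rw [norm_pow]
    exact pow_lt_one₀ (norm_nonneg Q) hQ (Nat.succ_ne_zero i)
  rw [← h] at h2
  simp at h2

lemma summable_pow_mul_choose {C r : ℝ} (hC : 0 ≤ C) (hr0 : 0 ≤ r) (hr : r < 1) :
    Summable (fun m : ℕ => C ^ m * r ^ m.choose 2) := by
  apply summable_of_ratio_norm_eventually_le (r := 1/2) (by norm_num)
  have ht : Filter.Tendsto (fun m : ℕ => C * r ^ m) Filter.atTop (nhds 0) := by
    have := (tendsto_pow_atTop_nhds_zero_of_lt_one hr0 hr).const_mul C
    simpa using this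
  filter_upwards [ht.eventually_lt_const (by norm_num : (0:ℝ) < 1/2)] with m hm
  have hch : (m + 1).choose 2 = m.choose 2 + m := by
    have h : (m + 1).choose 2 = m.choose 1 + m.choose 2 := Nat.choose_succ_succ m 1
    rw [Nat.choose_one_right] at h
    omega
  have hnn : (0:ℝ) ≤ C ^ m * r ^ m.choose 2 := by positivity
  rw [Real.norm_of_nonneg (by positivity), Real.norm_of_nonneg hnn, hch]
  calc C ^ (m + 1) * r ^ (m.choose 2 + m)
      = (C * r ^ m) * (C ^ m * r ^ m.choose 2) := by ring
    _ ≤ (1/2) * (C ^ m * r ^ m.choose 2) := mul_le_mul_of_nonneg_right hm.le hnn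

/-- The complex per-part factor. -/
noncomputable def Afun (a b k : ℕ) (q u v : ℂ) (j : ℕ) (e : Bool) : ℂ :=
  bif e then v * q ^ (b - a) * (q ^ k) ^ j else u

/-- The real (norm) per-part factor. -/
noncomputable def AfunR (a b k : ℕ) (q u v : ℂ) (j : ℕ) (e : Bool) : ℝ :=
  bif e then ‖v‖ * ‖q‖ ^ (b - a) * ‖q ^ k‖ ^ j else ‖u‖

/-- The weight of `(m, ε, f)`. -/
noncomputable def Gw (a b k : ℕ) (q u v : ℂ) (m : ℕ) (pr : (Fin m → Bool) × (Fin m → ℕ)) : ℂ :=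
  (q ^ (m * a) * (q ^ k) ^ m.choose 2) *
    ((∏ j : Fin m, Afun a b k q u v (j : ℕ) (pr.1 j)) *
      (∏ j : Fin m, ((q ^ k) ^ ((j : ℕ) + 1)) ^ (pr.2 j)))

noncomputable def GwR (a b k : ℕ) (q u v : ℂ) (m : ℕ) (pr : (Fin m → Bool) × (Fin m → ℕ)) : ℝ :=
  (‖q‖ ^ (m * a) * ‖q ^ k‖ ^ m.choose 2) *
    ((∏ j : Fin m, AfunR a b k q u v (j : ℕ) (pr.1 j)) *
      (∏ j : Fin m, (‖q ^ k‖ ^ ((j : ℕ) + 1)) ^ (pr.2 j)))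

lemma norm_Afun (a b k : ℕ) (q u v : ℂ) (j : ℕ) (e : Bool) :
    ‖Afun a b k q u v j e‖ = AfunR a b k q u v j e := by
  cases e <;> simp [Afun, AfunR]

lemma norm_Gw (a b k : ℕ) (q u v : ℂ) (m : ℕ) (pr : (Fin m → Bool) × (Fin m → ℕ)) :
    ‖Gw a b k q u v m pr‖ = GwR a b k q u v m pr := by
  unfold Gw GwR
  rw [norm_mul, norm_mul, norm_mul, norm_pow, norm_pow, norm_prod, norm_prod]
  congr 1
  congr 1
  · exact Finset.prod_congr rfl fun j _ => norm_Afun a b k q u v _ _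
  · exact Finset.prod_congr rfl fun j _ => by rw [norm_pow, norm_pow]

lemma prodA (a b k : ℕ) (q u v : ℂ) (m : ℕ) (ε : Fin m → Bool) :
    (∏ j : Fin m, Afun a b k q u v (j : ℕ) (ε j))
      = u ^ (m - ∑ j : Fin m, b2 (ε j)) * v ^ (∑ j : Fin m, b2 (ε j)) * q ^ ((b - a) * ∑ j : Fin m, b2 (ε j))
        * (q ^ k) ^ (∑ j : Fin m, (j : ℕ) * b2 (ε j)) := by
  have h1 : ∀ j : Fin m, Afun a b k q u v (j : ℕ) (ε j)
      = u ^ (1 - b2 (ε j)) * v ^ (b2 (ε j)) * q ^ ((b - a) * b2 (ε j))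
        * (q ^ k) ^ ((j : ℕ) * b2 (ε j)) := by
    intro j
    cases hε : ε j <;> simp [Afun, b2]
  rw [Finset.prod_congr rfl fun j _ => h1 j]
  rw [Finset.prod_mul_distrib, Finset.prod_mul_distrib, Finset.prod_mul_distrib,
    Finset.prod_pow_eq_pow_sum, Finset.prod_pow_eq_pow_sum, Finset.prod_pow_eq_pow_sum,
    Finset.prod_pow_eq_pow_sum]
  have hsum : (∑ j : Fin m, (1 - b2 (ε j))) + (∑ j : Fin m, b2 (ε j)) = m := by
    rw [← Finset.sum_add_distrib]
    rw [Finset.sum_congr rfl (fun j (_ : j ∈ Finset.univ) => by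
      cases ε j <;> simp : ∀ j ∈ Finset.univ, (1 - b2 (ε j)) + b2 (ε j) = 1)]
    simp
  have h2 : (∑ j : Fin m, (1 - b2 (ε j))) = m - ∑ j : Fin m, b2 (ε j) := by omega
  rw [h2, ← Finset.mul_sum]

lemma Esum_ofFn (m : ℕ) (t : Fin m → Bool × ℕ) :
    Esum (List.ofFn t) = ∑ j : Fin m, b2 (t j).1 := by
  simp [Esum, List.map_ofFn, List.sum_ofFn, Function.comp]

lemma Fsum_ofFn (m : ℕ) (t : Fin m → Bool × ℕ) :
    Fsum (List.ofFn t) = ∑ j : Fin m, (t j).2 := by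
  simp [Fsum, List.map_ofFn, List.sum_ofFn, Function.comp]

lemma Csum_ofFn : ∀ (m : ℕ) (t : Fin m → Bool × ℕ),
    Csum (List.ofFn t)
      = m.choose 2 + (∑ j : Fin m, (j : ℕ) * b2 (t j).1) + (∑ j : Fin m, ((j : ℕ) + 1) * (t j).2) := by
  intro m
  induction m with
  | zero => intro t; simp [List.ofFn_zero, Csum]
  | succ n ih =>
    intro t
    rw [List.ofFn_succ]
    rw [show Csum (t 0 :: List.ofFn fun i : Fin n => t i.succ)
        = ctop (t 0 :: List.ofFn fun i : Fin n => t i.succ)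
          + Csum (List.ofFn fun i : Fin n => t i.succ) from rfl]
    rw [ctop_eq, ih, Esum_ofFn, Fsum_ofFn, List.length_ofFn]
    rw [Fin.sum_univ_succ (f := fun j : Fin (n+1) => (j : ℕ) * b2 (t j).1),
      Fin.sum_univ_succ (f := fun j : Fin (n+1) => ((j : ℕ) + 1) * (t j).2)]
    simp only [Fin.val_zero, Fin.val_succ, Nat.zero_mul, Nat.zero_add]
    have e1 : ∀ j : Fin n, ((j : ℕ) + 1) * b2 (t j.succ).1
        = (j : ℕ) * b2 (t j.succ).1 + b2 (t j.succ).1 := fun j => by ring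
    have e2 : ∀ j : Fin n, ((j : ℕ) + 1 + 1) * (t j.succ).2
        = ((j : ℕ) + 1) * (t j.succ).2 + (t j.succ).2 := fun j => by ring
    rw [Finset.sum_congr rfl fun j _ => e1 j, Finset.sum_congr rfl fun j _ => e2 j,
      Finset.sum_add_distrib, Finset.sum_add_distrib]
    have hch : (n + 1).choose 2 = n.choose 2 + n := by
      have h : (n + 1).choose 2 = n.choose 1 + n.choose 2 := Nat.choose_succ_succ n 1
      rw [Nat.choose_one_right] at h
      omega
    omega

lemma weight_formula (a b k : ℕ) (ha : 1 ≤ a) (hab : a < b) (hbk : b ≤ k) (q u v : ℂ)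
    (m : ℕ) (t : Fin m → Bool × ℕ) :
    u ^ lcount k a (enc a b k (List.ofFn t)) * v ^ lcount k b (enc a b k (List.ofFn t))
      * q ^ (enc a b k (List.ofFn t)).sum
    = Gw a b k q u v m (fun j => (t j).1, fun j => (t j).2) := by
  rw [lcount_a_enc a b k ha hab hbk, lcount_b_enc a b k ha hab hbk, sum_enc,
    Esum_ofFn, Csum_ofFn, List.length_ofFn]
  unfold Gw
  dsimp only
  rw [prodA]
  have h3 : ∀ j : Fin m, (((q:ℂ) ^ k) ^ ((j:ℕ) + 1)) ^ ((fun j => (t j).2) j)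
      = (q ^ k) ^ (((j:ℕ) + 1) * (t j).2) := fun j => by rw [← pow_mul]
  rw [Finset.prod_congr rfl fun j _ => h3 j, Finset.prod_pow_eq_pow_sum]
  rw [pow_add, pow_add, pow_mul q k]
  ring

end GenD





namespace GenD
open Finset

noncomputable def encD (a b k : ℕ) (ha : 1 ≤ a) (hab : a < b) (hbk : b ≤ k) :
    List (Bool × ℕ) → {l : List ℕ // memD a b k l} :=
  fun w => ⟨enc a b k w, memD_enc a b k ha hab hbk w⟩

lemma encD_bij (a b k : ℕ) (ha : 1 ≤ a) (hab : a < b) (hbk : b ≤ k) :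
    Function.Bijective (encD a b k ha hab hbk) := by
  constructor
  · intro w w' h
    exact enc_inj a b k ha hab hbk w w' (congrArg Subtype.val h)
  · rintro ⟨l, hl⟩
    obtain ⟨w, hw⟩ := enc_surj a b k ha hab hbk l hl
    exact ⟨w, Subtype.ext hw⟩

noncomputable def EE (a b k : ℕ) (ha : 1 ≤ a) (hab : a < b) (hbk : b ≤ k) :
    (Σ m : ℕ, (Fin m → Bool) × (Fin m → ℕ)) ≃ {l : List ℕ // memD a b k l} :=
  (Equiv.sigmaCongrRight (fun m => (Equiv.arrowProdEquivProdArrow (Fin m) (fun _ => Bool) (fun _ => ℕ)).symm)).trans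
    ((List.equivSigmaTuple (α := Bool × ℕ)).symm.trans
      (Equiv.ofBijective _ (encD_bij a b k ha hab hbk)))

lemma EE_apply (a b k : ℕ) (ha : 1 ≤ a) (hab : a < b) (hbk : b ≤ k)
    (p : Σ m : ℕ, (Fin m → Bool) × (Fin m → ℕ)) :
    (EE a b k ha hab hbk p).1 = enc a b k (List.ofFn (fun j => (p.2.1 j, p.2.2 j))) := rfl

lemma weight_EE (a b k : ℕ) (ha : 1 ≤ a) (hab : a < b) (hbk : b ≤ k) (q u v : ℂ)
    (p : Σ m : ℕ, (Fin m → Bool) × (Fin m → ℕ)) :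
    u ^ lcount k a (EE a b k ha hab hbk p).1 * v ^ lcount k b (EE a b k ha hab hbk p).1
      * q ^ (EE a b k ha hab hbk p).1.sum = Gw a b k q u v p.1 p.2 := by
  rcases p with ⟨m, ε, f⟩
  rw [EE_apply]
  exact weight_formula a b k ha hab hbk q u v m (fun j => (ε j, f j))

end GenD


namespace GenD
open Finset

noncomputable def Rm (a b k : ℕ) (q u v : ℂ) (m : ℕ) : ℝ :=
  (‖q‖ ^ (m * a) * ‖q ^ k‖ ^ m.choose 2) *
    ((∏ j : Fin m, (‖u‖ + ‖v‖ * ‖q‖ ^ (b - a) * ‖q ^ k‖ ^ (j : ℕ))) *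
      ∏ j : Fin m, (1 - ‖q ^ k‖ ^ ((j : ℕ) + 1))⁻¹)

lemma hxC {k : ℕ} {q : ℂ} (hQ : ‖q ^ k‖ < 1) (m : ℕ) :
    ∀ j : Fin m, ‖(q ^ k) ^ ((j : ℕ) + 1)‖ < 1 := fun j => by
  rw [norm_pow]; exact pow_lt_one₀ (norm_nonneg _) hQ (Nat.succ_ne_zero _)

lemma hxR {k : ℕ} {q : ℂ} (hQ : ‖q ^ k‖ < 1) (m : ℕ) :
    ∀ j : Fin m, ‖(‖q ^ k‖ : ℝ) ^ ((j : ℕ) + 1)‖ < 1 := fun j => by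
  rw [Real.norm_of_nonneg (by positivity)]
  exact pow_lt_one₀ (norm_nonneg _) hQ (Nat.succ_ne_zero _)

lemma AfunR_nonneg (a b k : ℕ) (q u v : ℂ) (j : ℕ) (e : Bool) :
    0 ≤ AfunR a b k q u v j e := by
  cases e
  · simp [AfunR]
  · simp only [AfunR, cond_true]
    positivity

section S1
variable (a b k : ℕ) (q u v : ℂ)

lemma summable_Gw_fiber (hQ : ‖q ^ k‖ < 1) (m : ℕ) :
    Summable (fun pr : (Fin m → Bool) × (Fin m → ℕ) => Gw a b k q u v m pr) := by
  have h := (fiber_tsum m (fun j e => Afun a b k q u v (j : ℕ) e)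
    (fun j => (q ^ k) ^ ((j : ℕ) + 1)) (hxC hQ m)).1
  exact (h.of_norm.mul_left _)

lemma tsum_Gw_fiber (hQ : ‖q ^ k‖ < 1) (m : ℕ) :
    (∑' pr : (Fin m → Bool) × (Fin m → ℕ), Gw a b k q u v m pr)
      = (q ^ (m * a) * (q ^ k) ^ m.choose 2) *
        ((∏ j : Fin m, (u + v * q ^ (b - a) * (q ^ k) ^ (j : ℕ))) *
          ∏ j : Fin m, (1 - (q ^ k) ^ ((j : ℕ) + 1))⁻¹) := by
  have h := (fiber_tsum m (fun j e => Afun a b k q u v (j : ℕ) e)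
    (fun j => (q ^ k) ^ ((j : ℕ) + 1)) (hxC hQ m)).2
  calc (∑' pr : (Fin m → Bool) × (Fin m → ℕ), Gw a b k q u v m pr)
      = ∑' pr : (Fin m → Bool) × (Fin m → ℕ), (q ^ (m * a) * (q ^ k) ^ m.choose 2) *
          ((∏ j : Fin m, Afun a b k q u v (j : ℕ) (pr.1 j)) *
            ∏ j : Fin m, ((q ^ k) ^ ((j : ℕ) + 1)) ^ (pr.2 j)) := rfl
    _ = (q ^ (m * a) * (q ^ k) ^ m.choose 2) *
          ∑' pr : (Fin m → Bool) × (Fin m → ℕ),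
            ((∏ j : Fin m, Afun a b k q u v (j : ℕ) (pr.1 j)) *
              ∏ j : Fin m, ((q ^ k) ^ ((j : ℕ) + 1)) ^ (pr.2 j)) := tsum_mul_left
    _ = _ := by rw [h]; rfl

lemma summable_norm_Gw_fiber (hQ : ‖q ^ k‖ < 1) (m : ℕ) :
    Summable (fun pr : (Fin m → Bool) × (Fin m → ℕ) => ‖Gw a b k q u v m pr‖) := by
  have h := (fiber_tsum (𝕜 := ℝ) m (fun j e => AfunR a b k q u v (j : ℕ) e)
    (fun j => (‖q ^ k‖ : ℝ) ^ ((j : ℕ) + 1)) (hxR hQ m)).1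
  have h2 : Summable (fun pr : (Fin m → Bool) × (Fin m → ℕ) =>
      (∏ j : Fin m, AfunR a b k q u v (j : ℕ) (pr.1 j)) *
        ∏ j : Fin m, ((‖q ^ k‖ : ℝ) ^ ((j : ℕ) + 1)) ^ (pr.2 j)) := by
    apply h.congr
    intro pr
    apply Real.norm_of_nonneg
    apply mul_nonneg
    · exact Finset.prod_nonneg fun j _ => AfunR_nonneg a b k q u v _ _
    · exact Finset.prod_nonneg fun j _ => by positivity
  have h3 := h2.mul_left (‖q‖ ^ (m * a) * ‖q ^ k‖ ^ m.choose 2)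
  apply h3.congr
  intro pr
  rw [norm_Gw]
  rfl

lemma tsum_norm_Gw_fiber (hQ : ‖q ^ k‖ < 1) (m : ℕ) :
    (∑' pr : (Fin m → Bool) × (Fin m → ℕ), ‖Gw a b k q u v m pr‖) = Rm a b k q u v m := by
  have h := (fiber_tsum (𝕜 := ℝ) m (fun j e => AfunR a b k q u v (j : ℕ) e)
    (fun j => (‖q ^ k‖ : ℝ) ^ ((j : ℕ) + 1)) (hxR hQ m)).2
  calc (∑' pr : (Fin m → Bool) × (Fin m → ℕ), ‖Gw a b k q u v m pr‖)
      = ∑' pr : (Fin m → Bool) × (Fin m → ℕ), (‖q‖ ^ (m * a) * ‖q ^ k‖ ^ m.choose 2) *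
          ((∏ j : Fin m, AfunR a b k q u v (j : ℕ) (pr.1 j)) *
            ∏ j : Fin m, ((‖q ^ k‖ : ℝ) ^ ((j : ℕ) + 1)) ^ (pr.2 j)) := by
        refine tsum_congr fun pr => ?_
        rw [norm_Gw]
        rfl
    _ = (‖q‖ ^ (m * a) * ‖q ^ k‖ ^ m.choose 2) *
          ∑' pr : (Fin m → Bool) × (Fin m → ℕ),
            ((∏ j : Fin m, AfunR a b k q u v (j : ℕ) (pr.1 j)) *
              ∏ j : Fin m, ((‖q ^ k‖ : ℝ) ^ ((j : ℕ) + 1)) ^ (pr.2 j)) := tsum_mul_left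
    _ = Rm a b k q u v m := by rw [h]; rfl

lemma Rm_nonneg (hQ : ‖q ^ k‖ < 1) (m : ℕ) : 0 ≤ Rm a b k q u v m := by
  unfold Rm
  apply mul_nonneg (by positivity)
  apply mul_nonneg
  · exact Finset.prod_nonneg fun j _ => by positivity
  · refine Finset.prod_nonneg fun j _ => ?_
    have h4 : ‖q ^ k‖ ^ ((j : ℕ) + 1) ≤ ‖q ^ k‖ ^ 1 :=
      pow_le_pow_of_le_one (norm_nonneg _) hQ.le (by omega)
    rw [pow_one] at h4
    have h5 : (0:ℝ) < 1 - ‖q ^ k‖ ^ ((j : ℕ) + 1) := by linarith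
    positivity

lemma Rm_le (hq : ‖q‖ < 1) (hQ : ‖q ^ k‖ < 1) (m : ℕ) :
    Rm a b k q u v m ≤ ((‖u‖ + ‖v‖) * (1 - ‖q ^ k‖)⁻¹) ^ m * ‖q ^ k‖ ^ m.choose 2 := by
  have hQ0 : (0:ℝ) ≤ ‖q ^ k‖ := norm_nonneg _
  have hQ1 : (0:ℝ) < 1 - ‖q ^ k‖ := by linarith
  have h1 : ‖q‖ ^ (m * a) * ‖q ^ k‖ ^ m.choose 2 ≤ ‖q ^ k‖ ^ m.choose 2 := by
    apply mul_le_of_le_one_left (by positivity)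
    exact pow_le_one₀ (norm_nonneg q) hq.le
  have h2 : (∏ j : Fin m, (‖u‖ + ‖v‖ * ‖q‖ ^ (b - a) * ‖q ^ k‖ ^ (j : ℕ)))
      ≤ (‖u‖ + ‖v‖) ^ m := by
    calc (∏ j : Fin m, (‖u‖ + ‖v‖ * ‖q‖ ^ (b - a) * ‖q ^ k‖ ^ (j : ℕ)))
        ≤ ∏ _j : Fin m, (‖u‖ + ‖v‖) := by
          apply Finset.prod_le_prod (fun j _ => by positivity)
          intro j _
          have : ‖v‖ * ‖q‖ ^ (b - a) * ‖q ^ k‖ ^ (j : ℕ) ≤ ‖v‖ := by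
            rw [mul_assoc]
            apply mul_le_of_le_one_right (norm_nonneg v)
            apply mul_le_one₀ (pow_le_one₀ (norm_nonneg q) hq.le)
              (by positivity) (pow_le_one₀ hQ0 hQ.le)
          linarith
      _ = (‖u‖ + ‖v‖) ^ m := by
          rw [Finset.prod_const, Finset.card_univ, Fintype.card_fin]
  have h3 : (∏ j : Fin m, (1 - ‖q ^ k‖ ^ ((j : ℕ) + 1))⁻¹) ≤ ((1 - ‖q ^ k‖)⁻¹) ^ m := by
    calc (∏ j : Fin m, (1 - ‖q ^ k‖ ^ ((j : ℕ) + 1))⁻¹)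
        ≤ ∏ _j : Fin m, (1 - ‖q ^ k‖)⁻¹ := by
          apply Finset.prod_le_prod
          · intro j _
            have : ‖q ^ k‖ ^ ((j : ℕ) + 1) ≤ ‖q ^ k‖ ^ 1 :=
              pow_le_pow_of_le_one hQ0 hQ.le (by omega)
            rw [pow_one] at this
            have h5 : (0:ℝ) < 1 - ‖q ^ k‖ ^ ((j : ℕ) + 1) := by linarith
            positivity
          · intro j _
            apply inv_anti₀ hQ1
            have : ‖q ^ k‖ ^ ((j : ℕ) + 1) ≤ ‖q ^ k‖ ^ 1 :=
              pow_le_pow_of_le_one hQ0 hQ.le (by omega)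
            rw [pow_one] at this
            linarith
      _ = ((1 - ‖q ^ k‖)⁻¹) ^ m := by
          rw [Finset.prod_const, Finset.card_univ, Fintype.card_fin]
  have hP2 : (0:ℝ) ≤ ∏ j : Fin m, (1 - ‖q ^ k‖ ^ ((j : ℕ) + 1))⁻¹ := by
    refine Finset.prod_nonneg fun j _ => ?_
    have : ‖q ^ k‖ ^ ((j : ℕ) + 1) ≤ ‖q ^ k‖ ^ 1 :=
      pow_le_pow_of_le_one hQ0 hQ.le (by omega)
    rw [pow_one] at this
    have h5 : (0:ℝ) < 1 - ‖q ^ k‖ ^ ((j : ℕ) + 1) := by linarith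
    positivity
  have hP1 : (0:ℝ) ≤ ∏ j : Fin m, (‖u‖ + ‖v‖ * ‖q‖ ^ (b - a) * ‖q ^ k‖ ^ (j : ℕ)) :=
    Finset.prod_nonneg fun j _ => by positivity
  calc Rm a b k q u v m
      ≤ ‖q ^ k‖ ^ m.choose 2 * ((‖u‖ + ‖v‖) ^ m * ((1 - ‖q ^ k‖)⁻¹) ^ m) := by
        unfold Rm
        apply mul_le_mul h1
        · exact mul_le_mul h2 h3 hP2 (by positivity)
        · exact mul_nonneg hP1 hP2
        · positivity
    _ = ((‖u‖ + ‖v‖) * (1 - ‖q ^ k‖)⁻¹) ^ m * ‖q ^ k‖ ^ m.choose 2 := by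
        rw [mul_pow]; ring

lemma summable_Rm (hq : ‖q‖ < 1) (hQ : ‖q ^ k‖ < 1) : Summable (Rm a b k q u v) := by
  apply Summable.of_nonneg_of_le (Rm_nonneg a b k q u v hQ) (Rm_le a b k q u v hq hQ)
  have hc : (0:ℝ) ≤ (‖u‖ + ‖v‖) * (1 - ‖q ^ k‖)⁻¹ :=
    mul_nonneg (by positivity) (inv_nonneg.mpr (by linarith))
  exact summable_pow_mul_choose hc (norm_nonneg _) hQ

lemma summable_Gw_sigma (hq : ‖q‖ < 1) (hQ : ‖q ^ k‖ < 1) :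
    Summable (fun p : Σ m : ℕ, (Fin m → Bool) × (Fin m → ℕ) => Gw a b k q u v p.1 p.2) := by
  apply Summable.of_norm
  rw [summable_sigma_of_nonneg (fun _ => norm_nonneg _)]
  exact ⟨fun m => summable_norm_Gw_fiber a b k q u v hQ m,
    (summable_Rm a b k q u v hq hQ).congr
      (fun m => (tsum_norm_Gw_fiber a b k q u v hQ m).symm)⟩

lemma key1 (ha : 1 ≤ a) (hab : a < b) (hbk : b ≤ k) (hq : ‖q‖ < 1) :
    (∑' π : {l : List ℕ // memD a b k l},
        u ^ lcount k a π.1 * v ^ lcount k b π.1 * q ^ π.1.sum)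
      = ∑' m : ℕ, (q ^ (m * a) * (q ^ k) ^ m.choose 2) *
          ((∏ j : Fin m, (u + v * q ^ (b - a) * (q ^ k) ^ (j : ℕ))) *
            ∏ j : Fin m, (1 - (q ^ k) ^ ((j : ℕ) + 1))⁻¹) := by
  have hQ : ‖q ^ k‖ < 1 := by
    rw [norm_pow]; exact pow_lt_one₀ (norm_nonneg q) hq (by omega)
  rw [← Equiv.tsum_eq (EE a b k ha hab hbk)
    (fun π => u ^ lcount k a π.1 * v ^ lcount k b π.1 * q ^ π.1.sum)]
  rw [tsum_congr (weight_EE a b k ha hab hbk q u v)]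
  rw [Summable.tsum_sigma (summable_Gw_sigma a b k q u v hq hQ)]
  exact tsum_congr (fun m => tsum_Gw_fiber a b k q u v hQ m)

end S1
end GenD


namespace GenD
open Finset

lemma Vm_eq (a b k : ℕ) (q u v : ℂ) (m : ℕ) :
    (q ^ (m * a) * (q ^ k) ^ m.choose 2) *
        ((∏ j : Fin m, (u + v * q ^ (b - a) * (q ^ k) ^ (j : ℕ))) *
          ∏ j : Fin m, (1 - (q ^ k) ^ ((j : ℕ) + 1))⁻¹)
      = q ^ (k * m.choose 2 + m * a) *
          (∏ j ∈ Finset.range m, (u + v * q ^ (b - a + k * j))) / qPoch (q ^ k) (q ^ k) m := by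
  rw [div_eq_mul_inv, qPoch_eq, ← Finset.prod_inv_distrib]
  rw [← Fin.prod_univ_eq_prod_range (fun j => (u + v * q ^ (b - a + k * j))) m,
    ← Fin.prod_univ_eq_prod_range (fun j => (1 - (q ^ k) ^ (j + 1))⁻¹) m]
  have h1 : ∀ j : Fin m, u + v * q ^ (b - a + k * (j : ℕ))
      = u + v * q ^ (b - a) * (q ^ k) ^ (j : ℕ) := by
    intro j; rw [pow_add, pow_mul]; ring
  rw [Finset.prod_congr rfl fun j _ => h1 j]
  rw [pow_add q (k * m.choose 2), pow_mul q k]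
  ring

lemma id1 (a b k : ℕ) (ha : 1 ≤ a) (hab : a < b) (hbk : b ≤ k) (q u v : ℂ) (hq : ‖q‖ < 1) :
    (∑' π : {l : List ℕ // memD a b k l},
        u ^ lcount k a π.1 * v ^ lcount k b π.1 * q ^ π.1.sum
      = ∑' m : ℕ, q ^ (k * Nat.choose m 2 + m * a) *
          (∏ j ∈ Finset.range m, (u + v * q ^ (b - a + k * j))) / qPoch (q ^ k) (q ^ k) m) := by
  rw [key1 a b k q u v ha hab hbk hq]
  exact tsum_congr fun m => Vm_eq a b k q u v m

end GenD


namespace GenD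
open Finset

lemma one_sub_pow_ne_zero {Q : ℂ} (hQ : ‖Q‖ < 1) {j : ℕ} (hj : j ≠ 0) :
    (1 : ℂ) - Q ^ j ≠ 0 := by
  intro h
  rw [sub_eq_zero] at h
  have h2 : ‖Q ^ j‖ < 1 := by
    rw [norm_pow]; exact pow_lt_one₀ (norm_nonneg Q) hQ hj
  rw [← h] at h2
  simp at h2

lemma qPoch_succ (Q : ℂ) (n : ℕ) :
    qPoch Q Q (n + 1) = qPoch Q Q n * (1 - Q ^ (n + 1)) := by
  rw [qPoch_eq, qPoch_eq, Finset.prod_range_succ]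

lemma choose_split : ∀ (s h : ℕ), (h + s).choose 2 = h.choose 2 + s.choose 2 + h * s := by
  intro s
  induction s with
  | zero => intro h; simp
  | succ n ih =>
    intro h
    have hassoc : h + (n + 1) = (h + n) + 1 := by omega
    rw [hassoc]
    have h2 : ((h + n) + 1).choose 2 = (h + n).choose 1 + (h + n).choose 2 :=
      Nat.choose_succ_succ (h + n) 1
    rw [Nat.choose_one_right] at h2
    have h4 : (n + 1).choose 2 = n.choose 1 + n.choose 2 := Nat.choose_succ_succ n 1
    rw [Nat.choose_one_right] at h4
    have h5 := ih h
    have h6 : h * (n + 1) = h * n + h := by ring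
    omega

/-- Sum of `Q^{Σ S}` over `h`-subsets of `range m`. -/
noncomputable def Gsum (Q : ℂ) (m h : ℕ) : ℂ :=
  ∑ S ∈ Finset.powersetCard h (Finset.range m), Q ^ (∑ i ∈ S, i)

/-- Closed form. -/
noncomputable def GB (Q : ℂ) (m h : ℕ) : ℂ :=
  if h ≤ m then Q ^ h.choose 2 * (qPoch Q Q m / (qPoch Q Q h * qPoch Q Q (m - h))) else 0

lemma Gsum_zero (Q : ℂ) (m h : ℕ) (hh : m < h) : Gsum Q m h = 0 := by
  unfold Gsum
  rw [Finset.powersetCard_eq_empty.mpr (by simpa using hh)]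
  simp

lemma Gsum_rec (Q : ℂ) (m h : ℕ) :
    Gsum Q (m + 1) (h + 1) = Gsum Q m (h + 1) + Q ^ m * Gsum Q m h := by
  unfold Gsum
  have hnotmem : m ∉ Finset.range m := by simp
  rw [Finset.range_add_one, Finset.powersetCard_succ_insert hnotmem]
  have hdisj : Disjoint (Finset.powersetCard (h + 1) (Finset.range m))
      (Finset.image (insert m) (Finset.powersetCard h (Finset.range m))) := by
    rw [Finset.disjoint_left]
    intro S hS hS'
    rw [Finset.mem_powersetCard] at hS
    obtain ⟨T, hT, rfl⟩ := Finset.mem_image.mp hS'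
    have : m ∈ insert m T := Finset.mem_insert_self m T
    have := hS.1 this
    simp at this
  rw [Finset.sum_union hdisj]
  congr 1
  rw [Finset.sum_image]
  · rw [Finset.mul_sum]
    refine Finset.sum_congr rfl fun S hS => ?_
    rw [Finset.mem_powersetCard] at hS
    have hmS : m ∉ S := fun hm => by have := hS.1 hm; simp at this
    rw [Finset.sum_insert hmS, pow_add]
  · intro S hS T hT hST
    rw [Finset.mem_coe, Finset.mem_powersetCard] at hS hT
    have hmS : m ∉ S := fun hm => by have := hS.1 hm; simp at this
    have hmT : m ∉ T := fun hm => by have := hT.1 hm; simp at this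
    have : (insert m S).erase m = (insert m T).erase m := by rw [hST]
    rwa [Finset.erase_insert hmS, Finset.erase_insert hmT] at this

lemma Gsum_eq_GB {Q : ℂ} (hQ : ‖Q‖ < 1) : ∀ m h, Gsum Q m h = GB Q m h := by
  intro m
  induction m with
  | zero =>
    intro h
    cases h with
    | zero =>
      unfold Gsum GB
      simp [qPoch]
    | succ n =>
      rw [Gsum_zero Q 0 (n + 1) (by omega)]
      unfold GB
      rw [if_neg (by omega)]
  | succ m ih =>
    intro h
    cases h with
    | zero =>
      unfold Gsum GB
      rw [if_pos (by omega)]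
      rw [Finset.powersetCard_zero]
      have hpz : qPoch Q Q 0 = 1 := by simp [qPoch]
      have hnz := qPoch_ne_zero hQ (m + 1)
      rw [hpz]
      simp [div_self hnz]
    | succ h =>
      rw [Gsum_rec, ih (h + 1), ih h]
      by_cases hcase : h + 1 ≤ m + 1
      · -- main case
        unfold GB
        rw [if_pos hcase]
        by_cases hc2 : h + 1 ≤ m
        · rw [if_pos hc2, if_pos (by omega)]
          have hsub1 : m + 1 - (h + 1) = m - h := by omega
          have hsub2 : m - (h + 1) = m - h - 1 := by omega
          rw [hsub1, hsub2]
          have hmh1 : 1 ≤ m - h := by omega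
          have e1 : qPoch Q Q (m + 1) = qPoch Q Q m * (1 - Q ^ (m + 1)) := qPoch_succ Q m
          have e2 : qPoch Q Q (h + 1) = qPoch Q Q h * (1 - Q ^ (h + 1)) := qPoch_succ Q h
          have e3 : qPoch Q Q (m - h) = qPoch Q Q (m - h - 1) * (1 - Q ^ (m - h)) := by
            have : m - h = (m - h - 1) + 1 := by omega
            rw [this, qPoch_succ, ← this]
          have hch : Q ^ (h + 1).choose 2 = Q ^ h.choose 2 * Q ^ h := by
            rw [← pow_add]
            congr 1
            have h4 : (h + 1).choose 2 = h.choose 1 + h.choose 2 := Nat.choose_succ_succ h 1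
            rw [Nat.choose_one_right] at h4
            omega
          have hm1 : Q ^ (m + 1) = Q ^ (m - h) * Q ^ h * Q := by
            rw [← pow_add, ← pow_succ]
            congr 1
            omega
          have hm0 : Q ^ m = Q ^ (m - h) * Q ^ h := by
            rw [← pow_add]
            congr 1
            omega
          have hh1 : Q ^ (h + 1) = Q ^ h * Q := by rw [pow_succ]
          have n1 : qPoch Q Q h ≠ 0 := qPoch_ne_zero hQ h
          have n2 : qPoch Q Q (m - h - 1) ≠ 0 := qPoch_ne_zero hQ _
          have n3 : (1 : ℂ) - Q ^ (h + 1) ≠ 0 := one_sub_pow_ne_zero hQ (by omega)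
          have n4 : (1 : ℂ) - Q ^ (m - h) ≠ 0 := one_sub_pow_ne_zero hQ (by omega)
          have n3' : (1 : ℂ) - Q ^ h * Q ≠ 0 := by rw [← pow_succ]; exact n3
          rw [e1, e2, e3, hch, hm1, hm0, hh1]
          rw [pow_succ] at n3
          field_simp
          ring
        · -- h = m
          have hm : h = m := by omega
          subst hm
          rw [if_neg (by omega), if_pos (le_refl h)]
          have hsub : h + 1 - (h + 1) = 0 := by omega
          have hsub2 : h - h = 0 := by omega
          rw [hsub, hsub2]
          have hch : (h + 1).choose 2 = h.choose 2 + h := by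
            have h4 : (h + 1).choose 2 = h.choose 1 + h.choose 2 := Nat.choose_succ_succ h 1
            rw [Nat.choose_one_right] at h4
            omega
          have n1 : qPoch Q Q (h + 1) ≠ 0 := qPoch_ne_zero hQ _
          rw [hch, pow_add]
          have hpz : qPoch Q Q 0 = 1 := by simp [qPoch]
          have n0 : qPoch Q Q h ≠ 0 := qPoch_ne_zero hQ h
          rw [hpz]
          field_simp
          ring
      · unfold GB
        rw [if_neg (by omega : ¬ h + 1 ≤ m), if_neg (by omega : ¬ h ≤ m), if_neg hcase]
        simp

end GenD


namespace GenD
open Finset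

/-- gap-encoding of a strictly increasing list -/
def encS : List ℕ → List ℕ
  | [] => []
  | g :: r => g :: (encS r).map (· + (g + 1))

lemma encS_length : ∀ w, (encS w).length = w.length := by
  intro w
  induction w with
  | nil => rfl
  | cons g r ih => simp [encS, ih]

lemma encS_chain : ∀ w, (encS w).Chain' (· < ·) := by
  intro w
  induction w with
  | nil => simp [encS, List.Chain']
  | cons g r ih =>
    rw [show encS (g :: r) = g :: (encS r).map (· + (g + 1)) from rfl]
    rw [List.Chain', List.isChain_cons]
    constructor
    · intro y hy
      rw [List.head?_map] at hy
      rcases hh : (encS r).head? with _ | z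
      · rw [hh] at hy; simp at hy
      · rw [hh] at hy
        simp at hy
        omega
    · rw [List.isChain_map]
      apply List.IsChain.imp _ ih
      intro x y hxy
      omega

lemma encS_nodup (w : List ℕ) : (encS w).Nodup := by
  have := List.isChain_iff_pairwise.mp (encS_chain w)
  exact this.imp (fun h => Nat.ne_of_lt h)

lemma encS_sorted (w : List ℕ) : (encS w).Pairwise (· < ·) :=
  List.isChain_iff_pairwise.mp (encS_chain w)

lemma encS_inj : ∀ w w', encS w = encS w' → w = w' := by
  intro w
  induction w with
  | nil =>
    intro w' h
    cases w' with
    | nil => rfl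
    | cons g r => exact absurd h (by simp [encS])
  | cons g r ih =>
    intro w' h
    cases w' with
    | nil => exact absurd h (by simp [encS])
    | cons g' r' =>
      rw [show encS (g :: r) = g :: (encS r).map (· + (g + 1)) from rfl,
        show encS (g' :: r') = g' :: (encS r').map (· + (g' + 1)) from rfl,
        List.cons.injEq] at h
      obtain ⟨h1, h2⟩ := h
      subst h1
      have h3 : encS r = encS r' := by
        exact List.map_injective_iff.mpr (add_left_injective (g + 1)) h2
      rw [ih r' h3]

lemma toFinset_map (f : ℕ → ℕ) : ∀ (l : List ℕ), (l.map f).toFinset = l.toFinset.image f := by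
  intro l
  induction l with
  | nil => simp
  | cons x r ih => simp [ih]

/-- the map from gap sequences to finite sets -/
def FS (p : Σ s : ℕ, (Fin s → ℕ)) : Finset ℕ := (encS (List.ofFn p.2)).toFinset

lemma card_FS (p : Σ s : ℕ, (Fin s → ℕ)) : (FS p).card = p.1 := by
  rw [FS, List.toFinset_card_of_nodup (encS_nodup _), encS_length, List.length_ofFn]

lemma FS_bijective : Function.Bijective FS := by
  constructor
  · rintro ⟨s, g⟩ ⟨s', g'⟩ h
    haveI : IsAntisymm ℕ (· < ·) :=
      ⟨fun a b h1 h2 => absurd (lt_trans h1 h2) (lt_irrefl a)⟩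
    have hc1 : (FS ⟨s, g⟩).card = s := card_FS _
    have hc2 : (FS ⟨s', g'⟩).card = s' := card_FS _
    have hcard : s = s' := by rw [← hc1, ← hc2, h]
    subst hcard
    have hperm := List.perm_of_nodup_nodup_toFinset_eq
      (encS_nodup (List.ofFn g)) (encS_nodup (List.ofFn g')) h
    have heq := List.Perm.eq_of_pairwise' (encS_sorted _) (encS_sorted _) hperm
    have h6 := encS_inj _ _ heq
    have h5 : g = g' := List.ofFn_inj.mp h6
    exact congrArg (Sigma.mk s) h5
  · intro S
    obtain ⟨n, hn⟩ : ∃ n, S.card = n := ⟨_, rfl⟩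
    induction n generalizing S with
    | zero =>
      rw [Finset.card_eq_zero] at hn
      subst hn
      exact ⟨⟨0, fun i => 0⟩, by simp [FS, encS]⟩
    | succ n ih =>
      have hne : S.Nonempty := by
        rw [← Finset.card_pos, hn]; omega
      set x := S.min' hne with hx
      have hxS : x ∈ S := S.min'_mem hne
      have herase : ∀ y ∈ S.erase x, x + 1 ≤ y := by
        intro y hy
        have h1 : y ∈ S := Finset.mem_of_mem_erase hy
        have h2 : y ≠ x := Finset.ne_of_mem_erase hy
        have := S.min'_le y h1
        omega
      set S' := (S.erase x).image (fun y => y - (x + 1)) with hS'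
      have hinj : Set.InjOn (fun y => y - (x + 1)) (S.erase x) := by
        intro y hy y' hy' hyy
        have := herase y (Finset.mem_coe.mp hy)
        have := herase y' (Finset.mem_coe.mp hy')
        simp only at hyy
        omega
      have hcard' : S'.card = n := by
        rw [hS', Finset.card_image_of_injOn hinj, Finset.card_erase_of_mem hxS, hn]
        omega
      obtain ⟨⟨s', g'⟩, hp⟩ := ih S' hcard'
      have hcfs : (FS ⟨s', g'⟩).card = s' := card_FS _
      have hs' : s' = n := by rw [← hcfs, hp, hcard']
      subst hs'
      refine ⟨⟨s' + 1, Fin.cons x g'⟩, ?_⟩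
      have hofn : List.ofFn (Fin.cons x g' : Fin (s'+1) → ℕ) = x :: List.ofFn g' := by
        rw [List.ofFn_succ]
        simp
      rw [FS, hofn, show encS (x :: List.ofFn g')
          = x :: (encS (List.ofFn g')).map (· + (x + 1)) from rfl]
      rw [List.toFinset_cons, toFinset_map]
      have : (encS (List.ofFn g')).toFinset = S' := hp
      rw [this, hS']
      rw [Finset.image_image]
      have himid : ((S.erase x).image ((fun y => y + (x + 1)) ∘ fun y => y - (x + 1)))
          = S.erase x := by
        rw [show ((fun y => y + (x + 1)) ∘ fun y => y - (x + 1))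
            = fun y => (y - (x + 1)) + (x + 1) from rfl]
        rw [Finset.image_congr (g := id) ?_, Finset.image_id]
        intro y hy
        have := herase y hy
        simp
        omega
      rw [himid, Finset.insert_erase hxS]

noncomputable def eFS : (Σ s : ℕ, (Fin s → ℕ)) ≃ Finset ℕ := Equiv.ofBijective FS FS_bijective

lemma sum_map_add (c : ℕ) : ∀ l : List ℕ, (l.map (· + c)).sum = l.sum + l.length * c := by
  intro l
  induction l with
  | nil => simp
  | cons x r ih => simp [ih]; ring

lemma sum_encS_ofFn : ∀ (s : ℕ) (g : Fin s → ℕ),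
    (encS (List.ofFn g)).sum = s.choose 2 + ∑ j : Fin s, (s - (j : ℕ)) * g j := by
  intro s
  induction s with
  | zero => intro g; simp [encS]
  | succ n ih =>
    intro g
    rw [List.ofFn_succ, show encS (g 0 :: List.ofFn fun i : Fin n => g i.succ)
        = g 0 :: (encS (List.ofFn fun i : Fin n => g i.succ)).map (· + (g 0 + 1)) from rfl]
    rw [List.sum_cons, sum_map_add, ih, encS_length, List.length_ofFn]
    rw [Fin.sum_univ_succ (f := fun j : Fin (n+1) => ((n + 1) - (j : ℕ)) * g j)]
    simp only [Fin.val_zero, Fin.val_succ, Nat.sub_zero]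
    have e1 : ∀ j : Fin n, (n + 1 - ((j : ℕ) + 1)) * g j.succ = (n - (j : ℕ)) * g j.succ := by
      intro j
      congr 1
      omega
    rw [Finset.sum_congr rfl fun j _ => e1 j]
    have hch : (n + 1).choose 2 = n.choose 2 + n := by
      have h4 : (n + 1).choose 2 = n.choose 1 + n.choose 2 := Nat.choose_succ_succ n 1
      rw [Nat.choose_one_right] at h4
      omega
    have hx1 : (n + 1) * g 0 = n * g 0 + g 0 := by ring
    have hx2 : n * (g 0 + 1) = n * g 0 + n := by ring
    omega

lemma prod_list_geom (t Q : ℂ) : ∀ l : List ℕ,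
    (l.map (fun i => t * Q ^ i)).prod = t ^ l.length * Q ^ l.sum := by
  intro l
  induction l with
  | nil => simp
  | cons x r ih =>
    simp only [List.map_cons, List.prod_cons, ih, List.length_cons, List.sum_cons]
    rw [pow_succ, pow_add]
    ring

lemma prod_FS (t Q : ℂ) (p : Σ s : ℕ, (Fin s → ℕ)) :
    (∏ i ∈ FS p, (t * Q ^ i)) = t ^ p.1 * Q ^ (p.1.choose 2 + ∑ j : Fin p.1, (p.1 - (j : ℕ)) * p.2 j) := by
  rw [FS, List.prod_toFinset _ (encS_nodup _), prod_list_geom, encS_length, List.length_ofFn,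
    sum_encS_ofFn]

lemma qPoch_reflect (Q : ℂ) (s : ℕ) :
    (∏ j : Fin s, (1 - Q ^ (s - (j : ℕ)))) = qPoch Q Q s := by
  rw [qPoch_eq, Fin.prod_univ_eq_prod_range (fun j => 1 - Q ^ (s - j)) s]
  rw [← Finset.prod_range_reflect (fun j => 1 - Q ^ (j + 1)) s]
  apply Finset.prod_congr rfl
  intro j hj
  rw [Finset.mem_range] at hj
  have he : s - 1 - j + 1 = s - j := by omega
  rw [he]

end GenD


namespace GenD
open Finset Filter

lemma prod_finset_summable_hasProd {w : ℕ → ℂ} (hw : Summable (fun i => ‖w i‖)) :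
    Summable (fun S : Finset ℕ => ∏ i ∈ S, w i) ∧
    HasProd (fun i => 1 + w i) (∑' S : Finset ℕ, ∏ i ∈ S, w i) := by
  have hnn : ∀ S : Finset ℕ, 0 ≤ ∏ i ∈ S, ‖w i‖ :=
    fun S => Finset.prod_nonneg fun i _ => norm_nonneg _
  have hbound : ∀ 𝒜 : Finset (Finset ℕ),
      ∑ S ∈ 𝒜, ∏ i ∈ S, ‖w i‖ ≤ Real.exp (∑' i, ‖w i‖) := by
    intro 𝒜
    have hsub : 𝒜 ⊆ (𝒜.sup id).powerset :=
      fun S hS => Finset.mem_powerset.mpr (Finset.le_sup (f := id) hS)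
    have hpa := Finset.prod_add (fun i => ‖w i‖) (fun _ => (1:ℝ)) (𝒜.sup id)
    simp only [Finset.prod_const_one, mul_one] at hpa
    calc ∑ S ∈ 𝒜, ∏ i ∈ S, ‖w i‖
        ≤ ∑ S ∈ (𝒜.sup id).powerset, ∏ i ∈ S, ‖w i‖ :=
          Finset.sum_le_sum_of_subset_of_nonneg hsub (fun S _ _ => hnn S)
      _ = ∏ i ∈ 𝒜.sup id, (‖w i‖ + 1) := hpa.symm
      _ ≤ ∏ i ∈ 𝒜.sup id, Real.exp ‖w i‖ := by
          apply Finset.prod_le_prod (fun i _ => by positivity)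
          intro i _
          have := Real.add_one_le_exp ‖w i‖
          linarith
      _ = Real.exp (∑ i ∈ 𝒜.sup id, ‖w i‖) := (Real.exp_sum _ _).symm
      _ ≤ Real.exp (∑' i, ‖w i‖) :=
          Real.exp_le_exp.mpr (Summable.sum_le_tsum _ (fun i _ => norm_nonneg _) hw)
  have hFR : Summable (fun S : Finset ℕ => ∏ i ∈ S, ‖w i‖) := summable_of_sum_le hnn hbound
  have hFsum : Summable (fun S : Finset ℕ => ∏ i ∈ S, w i) :=
    Summable.of_norm (hFR.congr (fun S => (norm_prod S w).symm))
  refine ⟨hFsum, ?_⟩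
  have hps := hFsum.hasSum
  have hpw : Tendsto (fun U : Finset ℕ => U.powerset) atTop atTop := by
    rw [Filter.tendsto_atTop_atTop]
    intro 𝒜
    refine ⟨𝒜.sup id, fun U hU => ?_⟩
    intro S hS
    exact Finset.mem_powerset.mpr (le_trans (Finset.le_sup (f := id) hS) hU)
  have hT := hps.comp hpw
  have heq : ∀ U : Finset ℕ,
      (∑ S ∈ U.powerset, ∏ i ∈ S, w i) = ∏ i ∈ U, (1 + w i) := by
    intro U
    have hpa := Finset.prod_add w (fun _ => (1:ℂ)) U
    simp only [Finset.prod_const_one, mul_one] at hpa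
    rw [← hpa]
    exact Finset.prod_congr rfl fun i _ => add_comm _ _
  exact (hT.congr heq : _)

noncomputable def Ws (t Q : ℂ) (s : ℕ) (g : Fin s → ℕ) : ℂ :=
  t ^ s * Q ^ (s.choose 2 + ∑ j : Fin s, (s - (j : ℕ)) * g j)

lemma Ws_eq (t Q : ℂ) (s : ℕ) (g : Fin s → ℕ) :
    Ws t Q s g = (t ^ s * Q ^ s.choose 2) * ∏ j : Fin s, (Q ^ (s - (j : ℕ))) ^ (g j) := by
  unfold Ws
  rw [pow_add]
  have : ∀ j : Fin s, (Q ^ (s - (j : ℕ))) ^ (g j) = Q ^ ((s - (j : ℕ)) * g j) :=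
    fun j => by rw [← pow_mul]
  rw [Finset.prod_congr rfl fun j _ => this j, Finset.prod_pow_eq_pow_sum]
  ring

lemma hxS {Q : ℂ} (hQ : ‖Q‖ < 1) (s : ℕ) : ∀ j : Fin s, ‖Q ^ (s - (j : ℕ))‖ < 1 := fun j => by
  rw [norm_pow]
  exact pow_lt_one₀ (norm_nonneg _) hQ (by omega)

lemma hxSR {Q : ℂ} (hQ : ‖Q‖ < 1) (s : ℕ) :
    ∀ j : Fin s, ‖(‖Q‖ : ℝ) ^ (s - (j : ℕ))‖ < 1 := fun j => by
  rw [Real.norm_of_nonneg (by positivity)]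
  exact pow_lt_one₀ (norm_nonneg _) hQ (by omega)

lemma tsum_Ws {Q : ℂ} (t : ℂ) (hQ : ‖Q‖ < 1) (s : ℕ) :
    (∑' g : Fin s → ℕ, Ws t Q s g) = t ^ s * Q ^ s.choose 2 / qPoch Q Q s := by
  obtain ⟨hs, hv⟩ := pi_geom s (fun j => Q ^ (s - (j : ℕ))) (hxS hQ s)
  calc (∑' g : Fin s → ℕ, Ws t Q s g)
      = ∑' g : Fin s → ℕ, (t ^ s * Q ^ s.choose 2) * ∏ j : Fin s, (Q ^ (s - (j : ℕ))) ^ (g j) :=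
        tsum_congr fun g => Ws_eq t Q s g
    _ = (t ^ s * Q ^ s.choose 2) * ∑' g : Fin s → ℕ, ∏ j : Fin s, (Q ^ (s - (j : ℕ))) ^ (g j) :=
        tsum_mul_left
    _ = (t ^ s * Q ^ s.choose 2) * ∏ j : Fin s, (1 - Q ^ (s - (j : ℕ)))⁻¹ := by rw [hv]
    _ = t ^ s * Q ^ s.choose 2 / qPoch Q Q s := by
        rw [Finset.prod_inv_distrib, qPoch_reflect, div_eq_mul_inv]

lemma norm_Ws (t Q : ℂ) (s : ℕ) (g : Fin s → ℕ) :
    ‖Ws t Q s g‖ = (‖t‖ ^ s * ‖Q‖ ^ s.choose 2) * ∏ j : Fin s, ((‖Q‖:ℝ) ^ (s - (j : ℕ))) ^ (g j) := by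
  rw [Ws_eq, norm_mul, norm_mul, norm_pow, norm_pow, norm_prod]
  congr 1
  exact Finset.prod_congr rfl fun j _ => by rw [norm_pow, norm_pow]

lemma summable_norm_Ws_fiber {Q : ℂ} (t : ℂ) (hQ : ‖Q‖ < 1) (s : ℕ) :
    Summable (fun g : Fin s → ℕ => ‖Ws t Q s g‖) := by
  obtain ⟨hs, hv⟩ := pi_geom s (fun j => (‖Q‖:ℝ) ^ (s - (j : ℕ))) (hxSR hQ s)
  have h2 : Summable (fun g : Fin s → ℕ => ∏ j : Fin s, ((‖Q‖:ℝ) ^ (s - (j : ℕ))) ^ (g j)) :=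
    hs.congr fun g => Real.norm_of_nonneg (Finset.prod_nonneg fun j _ => by positivity)
  exact ((h2.mul_left _).congr fun g => (norm_Ws t Q s g).symm)

lemma tsum_norm_Ws_fiber {Q : ℂ} (t : ℂ) (hQ : ‖Q‖ < 1) (s : ℕ) :
    (∑' g : Fin s → ℕ, ‖Ws t Q s g‖)
      = (‖t‖ ^ s * ‖Q‖ ^ s.choose 2) * ∏ j : Fin s, (1 - (‖Q‖:ℝ) ^ (s - (j : ℕ)))⁻¹ := by
  obtain ⟨hs, hv⟩ := pi_geom s (fun j => (‖Q‖:ℝ) ^ (s - (j : ℕ))) (hxSR hQ s)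
  have h2 : Summable (fun g : Fin s → ℕ => ∏ j : Fin s, ((‖Q‖:ℝ) ^ (s - (j : ℕ))) ^ (g j)) :=
    hs.congr fun g => Real.norm_of_nonneg (Finset.prod_nonneg fun j _ => by positivity)
  calc (∑' g : Fin s → ℕ, ‖Ws t Q s g‖)
      = ∑' g : Fin s → ℕ, (‖t‖ ^ s * ‖Q‖ ^ s.choose 2) *
          ∏ j : Fin s, ((‖Q‖:ℝ) ^ (s - (j : ℕ))) ^ (g j) := tsum_congr fun g => norm_Ws t Q s g
    _ = (‖t‖ ^ s * ‖Q‖ ^ s.choose 2) *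
          ∑' g : Fin s → ℕ, ∏ j : Fin s, ((‖Q‖:ℝ) ^ (s - (j : ℕ))) ^ (g j) := tsum_mul_left
    _ = _ := by rw [hv]

lemma tsum_norm_Ws_le {Q : ℂ} (t : ℂ) (hQ : ‖Q‖ < 1) (s : ℕ) :
    (∑' g : Fin s → ℕ, ‖Ws t Q s g‖)
      ≤ (‖t‖ * (1 - ‖Q‖)⁻¹) ^ s * ‖Q‖ ^ s.choose 2 := by
  rw [tsum_norm_Ws_fiber t hQ s]
  have hQ1 : (0:ℝ) < 1 - ‖Q‖ := by linarith
  have h3 : (∏ j : Fin s, (1 - (‖Q‖:ℝ) ^ (s - (j : ℕ)))⁻¹) ≤ ((1 - ‖Q‖)⁻¹) ^ s := by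
    calc (∏ j : Fin s, (1 - (‖Q‖:ℝ) ^ (s - (j : ℕ)))⁻¹)
        ≤ ∏ _j : Fin s, (1 - ‖Q‖)⁻¹ := by
          apply Finset.prod_le_prod
          · intro j _
            have : (‖Q‖:ℝ) ^ (s - (j : ℕ)) ≤ ‖Q‖ ^ 1 :=
              pow_le_pow_of_le_one (norm_nonneg _) hQ.le (by omega)
            rw [pow_one] at this
            have h5 : (0:ℝ) < 1 - ‖Q‖ ^ (s - (j : ℕ)) := by linarith
            positivity
          · intro j _
            apply inv_anti₀ hQ1
            have : (‖Q‖:ℝ) ^ (s - (j : ℕ)) ≤ ‖Q‖ ^ 1 :=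
              pow_le_pow_of_le_one (norm_nonneg _) hQ.le (by omega)
            rw [pow_one] at this
            linarith
      _ = ((1 - ‖Q‖)⁻¹) ^ s := by rw [Finset.prod_const, Finset.card_univ, Fintype.card_fin]
  calc (‖t‖ ^ s * ‖Q‖ ^ s.choose 2) * ∏ j : Fin s, (1 - (‖Q‖:ℝ) ^ (s - (j : ℕ)))⁻¹
      ≤ (‖t‖ ^ s * ‖Q‖ ^ s.choose 2) * ((1 - ‖Q‖)⁻¹) ^ s := by
        apply mul_le_mul_of_nonneg_left h3 (by positivity)
    _ = (‖t‖ * (1 - ‖Q‖)⁻¹) ^ s * ‖Q‖ ^ s.choose 2 := by rw [mul_pow]; ring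

lemma summable_Ws_sigma {Q : ℂ} (t : ℂ) (hQ : ‖Q‖ < 1) :
    Summable (fun p : Σ s : ℕ, (Fin s → ℕ) => Ws t Q p.1 p.2) := by
  apply Summable.of_norm
  rw [summable_sigma_of_nonneg (fun _ => norm_nonneg _)]
  refine ⟨fun s => summable_norm_Ws_fiber t hQ s, ?_⟩
  apply Summable.of_nonneg_of_le
    (fun s => tsum_nonneg (fun g => norm_nonneg _))
    (fun s => tsum_norm_Ws_le t hQ s)
  have hQ1 : (0:ℝ) < 1 - ‖Q‖ := by linarith
  exact summable_pow_mul_choose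
    (mul_nonneg (norm_nonneg t) (inv_nonneg.mpr hQ1.le)) (norm_nonneg Q) hQ

lemma euler_series (t Q : ℂ) (hQ : ‖Q‖ < 1) :
    (∑' S : Finset ℕ, ∏ i ∈ S, (t * Q ^ i))
      = ∑' s : ℕ, t ^ s * Q ^ s.choose 2 / qPoch Q Q s := by
  rw [← Equiv.tsum_eq eFS (fun S => ∏ i ∈ S, (t * Q ^ i))]
  have h1 : ∀ p : Σ s : ℕ, (Fin s → ℕ),
      (∏ i ∈ eFS p, (t * Q ^ i)) = Ws t Q p.1 p.2 := by
    intro p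
    have : eFS p = FS p := rfl
    rw [this, prod_FS]
    rfl
  rw [tsum_congr h1, Summable.tsum_sigma (summable_Ws_sigma t hQ)]
  exact tsum_congr fun s => tsum_Ws t hQ s

lemma euler_hasProd (t Q : ℂ) (hQ : ‖Q‖ < 1) :
    HasProd (fun i : ℕ => 1 + t * Q ^ i)
      (∑' s : ℕ, t ^ s * Q ^ s.choose 2 / qPoch Q Q s) := by
  have hw : Summable (fun i : ℕ => ‖t * Q ^ i‖) := by
    have := (summable_geometric_of_lt_one (norm_nonneg Q) hQ).mul_left ‖t‖
    apply this.congr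
    intro i
    rw [norm_mul, norm_pow]
  have h := prod_finset_summable_hasProd hw
  rw [← euler_series t Q hQ]
  exact h.2

lemma euler_tsum (t Q : ℂ) (hQ : ‖Q‖ < 1) :
    qPochInf (-t) Q = ∑' s : ℕ, t ^ s * Q ^ s.choose 2 / qPoch Q Q s := by
  unfold qPochInf
  have h : (fun i : ℕ => 1 - (-t) * Q ^ i) = fun i : ℕ => 1 + t * Q ^ i :=
    funext fun i => by ring
  rw [h]
  exact (euler_hasProd t Q hQ).tprod_eq

end GenD


namespace GenD
open Finset

noncomputable def Tw (a b k : ℕ) (q u v : ℂ) (h s : ℕ) : ℂ :=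
  (v ^ h * q ^ (b * h) * (q ^ k) ^ (2 * h.choose 2) / qPoch (q ^ k) (q ^ k) h) *
    ((u * q ^ a * (q ^ k) ^ h) ^ s * (q ^ k) ^ s.choose 2 / qPoch (q ^ k) (q ^ k) s)

/-- expansion of the product over parts -/
lemma prod_expand (a b k : ℕ) (q u v : ℂ) (m : ℕ) :
    (∏ j : Fin m, (u + v * q ^ (b - a) * (q ^ k) ^ (j : ℕ)))
      = ∑ h ∈ Finset.range (m + 1),
          u ^ (m - h) * (v * q ^ (b - a)) ^ h * Gsum (q ^ k) m h := by
  rw [Fin.prod_univ_eq_prod_range (fun j => (u + v * q ^ (b - a) * (q ^ k) ^ j)) m]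
  have h1 : ∀ j ∈ Finset.range m, (u + v * q ^ (b - a) * (q ^ k) ^ j)
      = (v * q ^ (b - a) * (q ^ k) ^ j + u) := fun j _ => add_comm _ _
  rw [Finset.prod_congr rfl h1]
  rw [Finset.prod_add]
  rw [Finset.sum_powerset (Finset.range m)
      (fun t => (∏ i ∈ t, v * q ^ (b - a) * (q ^ k) ^ i) * ∏ i ∈ Finset.range m \ t, u)]
  rw [Finset.card_range]
  · apply Finset.sum_congr rfl
    intro h hh
    unfold Gsum
    rw [Finset.mul_sum]
    apply Finset.sum_congr rfl
    intro S hS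
    rw [Finset.mem_powersetCard] at hS
    obtain ⟨hSsub, hScard⟩ := hS
    have e1 : (∏ i ∈ S, v * q ^ (b - a) * (q ^ k) ^ i)
        = (v * q ^ (b - a)) ^ h * (q ^ k) ^ (∑ i ∈ S, i) := by
      rw [Finset.prod_mul_distrib, Finset.prod_const, hScard, Finset.prod_pow_eq_pow_sum]
    have e2 : (∏ i ∈ Finset.range m \ S, u) = u ^ (m - h) := by
      rw [Finset.prod_const, Finset.card_sdiff_of_subset hSsub, Finset.card_range, hScard]
    rw [e1, e2]
    ring

set_option maxHeartbeats 1000000 in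
lemma step2 (a b k : ℕ) (ha : 1 ≤ a) (hab : a < b) (hbk : b ≤ k) (q u v : ℂ)
    (hQ : ‖q ^ k‖ < 1) (m h : ℕ) (hhm : h ≤ m) :
    (q ^ (m * a) * (q ^ k) ^ m.choose 2) *
        (u ^ (m - h) * (v * q ^ (b - a)) ^ h * GB (q ^ k) m h) *
        (qPoch (q ^ k) (q ^ k) m)⁻¹
      = Tw a b k q u v h (m - h) := by
  obtain ⟨s, rfl⟩ : ∃ s, m = h + s := ⟨m - h, by omega⟩
  have hsub : h + s - h = s := by omega
  rw [hsub]
  unfold GB Tw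
  rw [if_pos hhm, hsub]
  have hA : qPoch (q ^ k) (q ^ k) (h + s) ≠ 0 := qPoch_ne_zero hQ _
  have hB : qPoch (q ^ k) (q ^ k) h ≠ 0 := qPoch_ne_zero hQ _
  have hC : qPoch (q ^ k) (q ^ k) s ≠ 0 := qPoch_ne_zero hQ _
  -- power decompositions
  have e1 : q ^ ((h + s) * a) = (q ^ a) ^ h * (q ^ a) ^ s := by
    rw [← pow_add, ← pow_mul]
    congr 1
    ring
  have e2 : (q ^ k) ^ ((h + s).choose 2)
      = (q ^ k) ^ h.choose 2 * (q ^ k) ^ s.choose 2 * (q ^ k) ^ (h * s) := by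
    rw [← pow_add, ← pow_add]
    congr 1
    have := choose_split s h
    omega
  have e3 : q ^ (b * h) = (q ^ a) ^ h * (q ^ (b - a)) ^ h := by
    rw [← pow_mul, ← pow_mul, ← pow_add]
    congr 1
    have : a * h + (b - a) * h = (a + (b - a)) * h := by ring
    rw [this]
    congr 1
    omega
  have e4 : (q ^ k) ^ (2 * h.choose 2) = (q ^ k) ^ h.choose 2 * (q ^ k) ^ h.choose 2 := by
    rw [← pow_add]
    congr 1
    ring
  have e5 : (u * q ^ a * (q ^ k) ^ h) ^ s = u ^ s * (q ^ a) ^ s * ((q ^ k) ^ (h * s)) := by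
    rw [mul_pow, mul_pow, pow_mul]
  rw [e1, e2, e3, e4, e5]
  have e6 : (v * q ^ (b - a)) ^ h = v ^ h * (q ^ (b - a)) ^ h := mul_pow _ _ _
  rw [e6]
  field_simp

lemma Vm_expand (a b k : ℕ) (ha : 1 ≤ a) (hab : a < b) (hbk : b ≤ k) (q u v : ℂ)
    (hQ : ‖q ^ k‖ < 1) (m : ℕ) :
    (q ^ (m * a) * (q ^ k) ^ m.choose 2) *
        ((∏ j : Fin m, (u + v * q ^ (b - a) * (q ^ k) ^ (j : ℕ))) *
          ∏ j : Fin m, (1 - (q ^ k) ^ ((j : ℕ) + 1))⁻¹)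
      = ∑ h ∈ Finset.range (m + 1), Tw a b k q u v h (m - h) := by
  have hinv : (∏ j : Fin m, (1 - (q ^ k) ^ ((j : ℕ) + 1))⁻¹)
      = (qPoch (q ^ k) (q ^ k) m)⁻¹ := by
    rw [Finset.prod_inv_distrib]
    congr 1
    rw [qPoch_eq]
    exact Fin.prod_univ_eq_prod_range (fun j => (1 - (q ^ k) ^ (j + 1))) m
  rw [hinv, prod_expand a b k q u v m]
  rw [Finset.sum_mul, Finset.mul_sum]
  apply Finset.sum_congr rfl
  intro h hh
  rw [Finset.mem_range] at hh
  rw [Gsum_eq_GB hQ]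
  have := step2 a b k ha hab hbk q u v hQ m h (by omega)
  rw [← this]
  ring

end GenD


namespace GenD
open Finset

lemma norm_qPoch_ge {Q : ℂ} (hQ : ‖Q‖ < 1) (n : ℕ) :
    (1 - ‖Q‖) ^ n ≤ ‖qPoch Q Q n‖ := by
  rw [qPoch_eq, norm_prod]
  calc (1 - ‖Q‖) ^ n = ∏ _i ∈ Finset.range n, (1 - ‖Q‖) := by
        rw [Finset.prod_const, Finset.card_range]
    _ ≤ ∏ i ∈ Finset.range n, ‖1 - Q ^ (i + 1)‖ := by
        apply Finset.prod_le_prod (fun i _ => by linarith)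
        intro i _
        have h1 : ‖Q ^ (i + 1)‖ ≤ ‖Q‖ := by
          rw [norm_pow]
          have := pow_le_pow_of_le_one (norm_nonneg Q) hQ.le
            (show 1 ≤ i + 1 by omega)
          rwa [pow_one] at this
        have h2 := norm_sub_norm_le (1 : ℂ) (Q ^ (i + 1))
        simp only [norm_one] at h2
        linarith

lemma norm_qPoch_inv_le {Q : ℂ} (hQ : ‖Q‖ < 1) (n : ℕ) :
    ‖(qPoch Q Q n)⁻¹‖ ≤ ((1 - ‖Q‖)⁻¹) ^ n := by
  have h0 : (0:ℝ) < 1 - ‖Q‖ := by linarith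
  have h1 : (0:ℝ) < (1 - ‖Q‖) ^ n := pow_pos h0 n
  rw [norm_inv, inv_pow]
  exact inv_anti₀ h1 (norm_qPoch_ge hQ n)

lemma norm_Tw_le (a b k : ℕ) (q u v : ℂ) (hq : ‖q‖ < 1) (hQ : ‖q ^ k‖ < 1) (h s : ℕ) :
    ‖Tw a b k q u v h s‖
      ≤ ((‖v‖ * (1 - ‖q ^ k‖)⁻¹) ^ h * ‖q ^ k‖ ^ h.choose 2) *
        ((‖u‖ * (1 - ‖q ^ k‖)⁻¹) ^ s * ‖q ^ k‖ ^ s.choose 2) := by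
  have hr0 : (0:ℝ) ≤ ‖q ^ k‖ := norm_nonneg _
  have hr1 : (0:ℝ) < 1 - ‖q ^ k‖ := by linarith
  have heq : ‖Tw a b k q u v h s‖
      = (‖v‖ ^ h * ‖q‖ ^ (b * h) * ‖q ^ k‖ ^ (2 * h.choose 2) * ‖(qPoch (q^k) (q^k) h)⁻¹‖) *
        (‖u * q ^ a * (q ^ k) ^ h‖ ^ s * ‖q ^ k‖ ^ s.choose 2 * ‖(qPoch (q^k) (q^k) s)⁻¹‖) := by
    unfold Tw
    rw [div_eq_mul_inv, div_eq_mul_inv]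
    simp only [norm_mul, norm_pow]
  rw [heq]
  have b1 : ‖v‖ ^ h * ‖q‖ ^ (b * h) * ‖q ^ k‖ ^ (2 * h.choose 2) * ‖(qPoch (q^k) (q^k) h)⁻¹‖
      ≤ ‖v‖ ^ h * 1 * ‖q ^ k‖ ^ h.choose 2 * ((1 - ‖q ^ k‖)⁻¹) ^ h := by
    apply mul_le_mul ?_ (norm_qPoch_inv_le hQ h) (norm_nonneg _) (by positivity)
    apply mul_le_mul ?_ ?_ (by positivity) (by positivity)
    · apply mul_le_mul_of_nonneg_left (pow_le_one₀ (norm_nonneg q) hq.le) (by positivity)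
    · exact pow_le_pow_of_le_one hr0 hQ.le (by omega)
  have b2 : ‖u * q ^ a * (q ^ k) ^ h‖ ^ s * ‖q ^ k‖ ^ s.choose 2 * ‖(qPoch (q^k) (q^k) s)⁻¹‖
      ≤ ‖u‖ ^ s * ‖q ^ k‖ ^ s.choose 2 * ((1 - ‖q ^ k‖)⁻¹) ^ s := by
    apply mul_le_mul ?_ (norm_qPoch_inv_le hQ s) (norm_nonneg _) (by positivity)
    apply mul_le_mul_of_nonneg_right ?_ (by positivity)
    apply pow_le_pow_left₀ (norm_nonneg _)
    rw [norm_mul, norm_mul, norm_pow, norm_pow, mul_assoc]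
    apply mul_le_of_le_one_right (norm_nonneg u)
    exact mul_le_one₀ (pow_le_one₀ (norm_nonneg q) hq.le) (by positivity)
      (pow_le_one₀ hr0 hQ.le)
  calc _ ≤ (‖v‖ ^ h * 1 * ‖q ^ k‖ ^ h.choose 2 * ((1 - ‖q ^ k‖)⁻¹) ^ h) *
        (‖u‖ ^ s * ‖q ^ k‖ ^ s.choose 2 * ((1 - ‖q ^ k‖)⁻¹) ^ s) := by
        apply mul_le_mul b1 b2 (by positivity) ?_
        have : (0:ℝ) ≤ ‖v‖ ^ h * 1 * ‖q ^ k‖ ^ h.choose 2 * ((1 - ‖q ^ k‖)⁻¹) ^ h := by positivity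
        exact this
    _ = _ := by rw [mul_pow, mul_pow]; ring

lemma summable_norm_Tw (a b k : ℕ) (q u v : ℂ) (hq : ‖q‖ < 1) (hQ : ‖q ^ k‖ < 1) :
    Summable (fun p : ℕ × ℕ => ‖Tw a b k q u v p.1 p.2‖) := by
  have hr1 : (0:ℝ) < 1 - ‖q ^ k‖ := by linarith
  have s1 : Summable (fun h : ℕ => (‖v‖ * (1 - ‖q ^ k‖)⁻¹) ^ h * ‖q ^ k‖ ^ h.choose 2) :=
    summable_pow_mul_choose (mul_nonneg (norm_nonneg v) (inv_nonneg.mpr hr1.le))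
      (norm_nonneg _) hQ
  have s2 : Summable (fun s : ℕ => (‖u‖ * (1 - ‖q ^ k‖)⁻¹) ^ s * ‖q ^ k‖ ^ s.choose 2) :=
    summable_pow_mul_choose (mul_nonneg (norm_nonneg u) (inv_nonneg.mpr hr1.le))
      (norm_nonneg _) hQ
  have hb := Summable.mul_of_nonneg s1 s2
    (fun h => by positivity) (fun s => by positivity)
  exact Summable.of_nonneg_of_le (fun p => norm_nonneg _)
    (fun p => norm_Tw_le a b k q u v hq hQ p.1 p.2) hb

lemma summable_Tw (a b k : ℕ) (q u v : ℂ) (hq : ‖q‖ < 1) (hQ : ‖q ^ k‖ < 1) :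
    Summable (fun p : ℕ × ℕ => Tw a b k q u v p.1 p.2) :=
  Summable.of_norm (summable_norm_Tw a b k q u v hq hQ)

lemma antidiag_bij :
    Function.Bijective (fun p : (Σ m : ℕ, Fin (m + 1)) => (((p.2 : ℕ), p.1 - (p.2 : ℕ)) : ℕ × ℕ)) := by
  constructor
  · rintro ⟨m, i⟩ ⟨m', i'⟩ hmm
    simp only [Prod.mk.injEq] at hmm
    obtain ⟨h1, h2⟩ := hmm
    have hi : (i : ℕ) ≤ m := by omega
    have hi' : (i' : ℕ) ≤ m' := by omega
    have hm : m = m' := by omega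
    subst hm
    have : i = i' := Fin.ext h1
    rw [this]
  · rintro ⟨h, s⟩
    refine ⟨⟨h + s, ⟨h, by omega⟩⟩, ?_⟩
    simp

noncomputable def eD : (Σ m : ℕ, Fin (m + 1)) ≃ ℕ × ℕ := Equiv.ofBijective _ antidiag_bij

lemma regroup (f : ℕ → ℕ → ℂ) (hf : Summable (fun p : ℕ × ℕ => f p.1 p.2)) :
    (∑' p : ℕ × ℕ, f p.1 p.2) = ∑' m : ℕ, ∑ h ∈ Finset.range (m + 1), f h (m - h) := by
  rw [← Equiv.tsum_eq eD (fun p : ℕ × ℕ => f p.1 p.2)]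
  have hs : Summable (fun x : Σ m : ℕ, Fin (m + 1) => f ((x.2 : ℕ)) (x.1 - (x.2 : ℕ))) :=
    (eD.summable_iff).mpr hf
  have h1 : (fun x : Σ m : ℕ, Fin (m + 1) => f (eD x).1 (eD x).2)
      = fun x : Σ m : ℕ, Fin (m + 1) => f ((x.2 : ℕ)) (x.1 - (x.2 : ℕ)) := rfl
  rw [h1, Summable.tsum_sigma hs]
  apply tsum_congr
  intro m
  rw [tsum_fintype]
  exact Fin.sum_univ_eq_sum_range (fun h => f h (m - h)) (m + 1)

lemma id2 (a b k : ℕ) (ha : 1 ≤ a) (hab : a < b) (hbk : b ≤ k) (q u v : ℂ) (hq : ‖q‖ < 1) :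
    (∑' π : {l : List ℕ // memD a b k l},
        u ^ lcount k a π.1 * v ^ lcount k b π.1 * q ^ π.1.sum)
      = ∑' h : ℕ, v ^ h * q ^ (2 * k * Nat.choose h 2 + b * h) / qPoch (q ^ k) (q ^ k) h *
          qPochInf (-(u * q ^ (k * h + a))) (q ^ k) := by
  have hQ : ‖q ^ k‖ < 1 := by
    rw [norm_pow]; exact pow_lt_one₀ (norm_nonneg q) hq (by omega)
  rw [key1 a b k q u v ha hab hbk hq]
  rw [tsum_congr (Vm_expand a b k ha hab hbk q u v hQ)]
  rw [← regroup (Tw a b k q u v) (summable_Tw a b k q u v hq hQ)]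
  rw [Summable.tsum_prod' (summable_Tw a b k q u v hq hQ)
    (fun h => (summable_Tw a b k q u v hq hQ).prod_factor h)]
  apply tsum_congr
  intro h
  have heuler := euler_tsum (u * q ^ a * (q ^ k) ^ h) (q ^ k) hQ
  calc (∑' s : ℕ, Tw a b k q u v h s)
      = (v ^ h * q ^ (b * h) * (q ^ k) ^ (2 * h.choose 2) / qPoch (q ^ k) (q ^ k) h) *
        ∑' s : ℕ, ((u * q ^ a * (q ^ k) ^ h) ^ s * (q ^ k) ^ s.choose 2
          / qPoch (q ^ k) (q ^ k) s) := tsum_mul_left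
    _ = (v ^ h * q ^ (b * h) * (q ^ k) ^ (2 * h.choose 2) / qPoch (q ^ k) (q ^ k) h) *
        qPochInf (-(u * q ^ a * (q ^ k) ^ h)) (q ^ k) := by rw [← heuler]
    _ = v ^ h * q ^ (2 * k * Nat.choose h 2 + b * h) / qPoch (q ^ k) (q ^ k) h *
        qPochInf (-(u * q ^ (k * h + a))) (q ^ k) := by
        have harg : u * q ^ (k * h + a) = u * q ^ a * (q ^ k) ^ h := by
          rw [pow_add, pow_mul]; ring
        have hexp : q ^ (2 * k * Nat.choose h 2 + b * h)
            = (q ^ k) ^ (2 * h.choose 2) * q ^ (b * h) := by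
          rw [pow_add]
          congr 1
          rw [← pow_mul]
          congr 1
          ring
        rw [harg, hexp]
        ring

end GenD


/-- Generating function for `D_{a,b,k}`:
`Σ_{π ∈ D_{a,b,k}} u^{ℓ_a(π)} v^{ℓ_b(π)} q^{|π|}
  = Σ_{m≥0} u^m q^{k C(m,2)+ma} (-u⁻¹ v q^{b-a}; q^k)_m / (q^k;q^k)_m
  = Σ_{h≥0} v^h q^{2k C(h,2)+bh} / (q^k;q^k)_h · (-u q^{kh+a}; q^k)_∞`,
where `u^m (-u⁻¹ v q^{b-a}; q^k)_m = ∏_{j=0}^{m-1} (u + v q^{b-a+kj})`. -/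
theorem gen_D_abk (a b k : ℕ) (ha : 1 ≤ a) (hab : a < b) (hbk : b ≤ k)
    (q u v : ℂ) (hq : ‖q‖ < 1) :
    (∑' π : {l : List ℕ // memD a b k l},
        u ^ lcount k a π.1 * v ^ lcount k b π.1 * q ^ π.1.sum
      = ∑' m : ℕ, q ^ (k * Nat.choose m 2 + m * a) *
          (∏ j ∈ Finset.range m, (u + v * q ^ (b - a + k * j))) / qPoch (q ^ k) (q ^ k) m)
    ∧ (∑' π : {l : List ℕ // memD a b k l},
        u ^ lcount k a π.1 * v ^ lcount k b π.1 * q ^ π.1.sum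
      = ∑' h : ℕ, v ^ h * q ^ (2 * k * Nat.choose h 2 + b * h) / qPoch (q ^ k) (q ^ k) h *
          qPochInf (-(u * q ^ (k * h + a))) (q ^ k)) :=
  ⟨GenD.id1 a b k ha hab hbk q u v hq, GenD.id2 a b k ha hab hbk q u v hq⟩
end

section
/- For integers a, b, k with k ≥ b > a ≥ 1 and any ℓ ≥ 0, the map sending (π_1,…,π_ℓ) to (π_1 + k(ℓ−1), π_2 + k(ℓ−2), …, π_{ℓ−1} + k, π_ℓ) is a bijection from R_{a,b,k}(ℓ) to D_{a,b,k}(ℓ) preserving ℓ_a and ℓ_b and increasing the weight by exactly k·C(ℓ,2); consequently Σ_{π ∈ D_{a,b,k}(ℓ)} u^{ℓ_a(π)} v^{ℓ_b(π)} q^{|π|} = q^{k·C(ℓ,2)} Σ_{π ∈ R_{a,b,k}(ℓ)} u^{ℓ_a(π)} v^{ℓ_b(π)} q^{|π|}. -/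
/-- Add `k(ℓ-1), k(ℓ-2), …, k, 0` to the successive parts of a list of length `ℓ`. -/
def stretch (k : ℕ) (l : List ℕ) : List ℕ := l.mapIdx fun i x => x + k * (l.length - 1 - i)

/-- Membership in `R_{a,b,k}`: parts `≡ a` or `b (mod k)`, only parts `≡ a (mod k)` repeated. -/
def memR (a b k : ℕ) (l : List ℕ) : Prop :=
  l.Pairwise (· ≥ ·) ∧ (∀ x ∈ l, 0 < x ∧ (x % k = a % k ∨ x % k = b % k)) ∧
    (∀ x : ℕ, x % k = b % k → l.count x ≤ 1)

def unstretch (k : ℕ) (l : List ℕ) : List ℕ := l.mapIdx fun i x => x - k * (l.length - 1 - i)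

lemma stretch_nil (k : ℕ) : stretch k [] = [] := rfl

lemma stretch_cons (k x : ℕ) (l : List ℕ) :
    stretch k (x :: l) = (x + k * l.length) :: stretch k l := by
  simp only [stretch, List.mapIdx_cons, List.length_cons, Nat.add_sub_cancel, Nat.sub_sub]
  rw [show (fun (i x : ℕ) => x + k * (l.length - (i + 1)))
      = (fun (i x : ℕ) => x + k * (l.length - (1 + i))) from by
    funext i x; congr 2; omega]
  simp

lemma unstretch_cons (k x : ℕ) (l : List ℕ) :
    unstretch k (x :: l) = (x - k * l.length) :: unstretch k l := by
  simp only [unstretch, List.mapIdx_cons, List.length_cons, Nat.add_sub_cancel, Nat.sub_sub]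
  rw [show (fun (i x : ℕ) => x - k * (l.length - (i + 1)))
      = (fun (i x : ℕ) => x - k * (l.length - (1 + i))) from by
    funext i x; congr 2; omega]
  simp

lemma stretch_length (k : ℕ) (l : List ℕ) : (stretch k l).length = l.length := by
  simp [stretch]

lemma unstretch_length (k : ℕ) (l : List ℕ) : (unstretch k l).length = l.length := by
  simp [unstretch]

lemma stretch_sum (k : ℕ) (l : List ℕ) :
    (stretch k l).sum = l.sum + k * (l.length.choose 2) := by
  induction l with
  | nil => simp [stretch]
  | cons x t ih =>
    rw [stretch_cons]
    have h2 : (t.length + 1).choose 2 = t.length + t.length.choose 2 := by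
      rw [Nat.choose_succ_succ]
      simp
    simp only [List.sum_cons, ih, List.length_cons, h2]
    ring

lemma lcount_stretch (k c : ℕ) (l : List ℕ) : lcount k c (stretch k l) = lcount k c l := by
  induction l with
  | nil => rfl
  | cons x t ih =>
    rw [stretch_cons]
    simp only [lcount, List.filter_cons, Nat.add_mul_mod_self_left] at *
    split <;> simp [ih]

lemma stretch_injective (k : ℕ) : Function.Injective (stretch k) := by
  intro l1 l2 h
  induction l1 generalizing l2 with
  | nil =>
    cases l2 with
    | nil => rfl
    | cons y s => rw [stretch_nil, stretch_cons] at h; exact absurd h (by simp)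
  | cons x t ih =>
    cases l2 with
    | nil => rw [stretch_nil, stretch_cons] at h; exact absurd h (by simp)
    | cons y s =>
      rw [stretch_cons, stretch_cons, List.cons_eq_cons] at h
      obtain ⟨h1, h2⟩ := h
      have hts : t = s := ih h2
      subst hts
      have : x = y := by omega
      rw [this]

lemma memR_tail {a b k x : ℕ} {l : List ℕ} (h : memR a b k (x :: l)) : memR a b k l := by
  obtain ⟨hs, he, hc⟩ := h
  refine ⟨(List.pairwise_cons.mp hs).2, fun y hy => he y (List.mem_cons_of_mem _ hy),
    fun z hz => le_trans ?_ (hc z hz)⟩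
  simp [List.count_cons]

lemma memD_tail {a b k x : ℕ} {l : List ℕ} (h : memD a b k (x :: l)) : memD a b k l := by
  obtain ⟨hs, he, hc⟩ := h
  exact ⟨(List.pairwise_cons.mp hs).2, fun y hy => he y (List.mem_cons_of_mem _ hy), hc.tail⟩

lemma memD_head {a b k x : ℕ} {l : List ℕ} (h : memD a b k (x :: l)) : k * l.length < x := by
  induction l generalizing x with
  | nil => simpa using (h.2.1 x (by simp)).1
  | cons y t ih =>
    have hy : k * t.length < y := ih (memD_tail h)
    have hxy : y + k ≤ x := (List.isChain_cons_cons.mp h.2.2).1.1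
    have : k * (y :: t).length = k * t.length + k := by
      simp [Nat.mul_succ]
    omega

lemma memR_stretch {a b k : ℕ} (hk : 0 < k) {l : List ℕ} (h : memR a b k l) :
    memD a b k (stretch k l) := by
  induction l with
  | nil => exact ⟨by simp [stretch_nil], by simp [stretch_nil], by simp [stretch_nil, List.Chain']⟩
  | cons x t ih =>
    have htail := memR_tail h
    have ihd := ih htail
    rw [stretch_cons]
    have he : ∀ y ∈ (x + k * t.length) :: stretch k t,
        0 < y ∧ (y % k = a % k ∨ y % k = b % k) := by
      intro y hy
      rcases List.mem_cons.mp hy with hy | hy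
      · subst hy
        have hx := h.2.1 x (by simp)
        exact ⟨by omega, by rw [Nat.add_mul_mod_self_left]; exact hx.2⟩
      · exact ihd.2.1 y hy
    have hc : ((x + k * t.length) :: stretch k t).Chain'
        (fun p q => q + k ≤ p ∧ (p % k = b % k → q + k < p)) := by
      cases t with
      | nil => simp [stretch_nil, List.Chain']
      | cons y s =>
        rw [stretch_cons]; unfold List.Chain'; rw [List.isChain_cons_cons]
        have hxy : y ≤ x := (List.pairwise_cons.mp h.1).1 y (by simp)
        have hlen : k * (y :: s).length = k * s.length + k := by simp [Nat.mul_succ]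
        constructor
        · constructor
          · omega
          · intro hb
            rw [Nat.add_mul_mod_self_left] at hb
            have hyx : y < x := by
              rcases Nat.lt_or_ge y x with h' | h'
              · exact h'
              · have hxy' : x = y := by omega
                subst hxy'
                have hcnt := h.2.2 x hb
                simp [List.count_cons_self] at hcnt
            omega
        · rw [← stretch_cons]; exact ihd.2.2
    exact ⟨List.isChain_iff_pairwise.mp (hc.imp fun hpq => by omega), he, hc⟩

lemma unstretch_chain {a b k : ℕ} {m : List ℕ} (h : memD a b k m) :
    (unstretch k m).Chain' (fun p q => q ≤ p ∧ (p % k = b % k → q < p)) := by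
  induction m with
  | nil => simp [unstretch, List.Chain']
  | cons x t ih =>
    rw [unstretch_cons]
    cases t with
    | nil => simp [unstretch, List.Chain']
    | cons y s =>
      have hhx : k * (y :: s).length < x := memD_head h
      have hhy : k * s.length < y := memD_head (memD_tail h)
      have hch := List.isChain_cons_cons.mp h.2.2
      rw [unstretch_cons]; unfold List.Chain'; rw [List.isChain_cons_cons]
      have hlen : k * (y :: s).length = k * s.length + k := by simp [Nat.mul_succ]
      have hxk : y + k ≤ x := hch.1.1
      refine ⟨⟨by omega, ?_⟩, ?_⟩
      · intro hb
        have hxmod : (x - k * (y :: s).length) % k = x % k := by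
          conv_rhs => rw [show x = (x - k * (y :: s).length) + k * (y :: s).length by omega]
          rw [Nat.add_mul_mod_self_left]
        rw [hxmod] at hb
        have := hch.1.2 hb
        omega
      · rw [← unstretch_cons]; exact ih (memD_tail h)

lemma unstretch_elem {a b k : ℕ} {m : List ℕ} (h : memD a b k m) :
    ∀ y ∈ unstretch k m, 0 < y ∧ (y % k = a % k ∨ y % k = b % k) := by
  induction m with
  | nil => simp [unstretch]
  | cons x t ih =>
    rw [unstretch_cons]
    intro y hy
    rcases List.mem_cons.mp hy with hy | hy
    · subst hy
      have hhx : k * t.length < x := memD_head h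
      have hxmod : (x - k * t.length) % k = x % k := by
        conv_rhs => rw [show x = (x - k * t.length) + k * t.length by omega]
        rw [Nat.add_mul_mod_self_left]
      exact ⟨by omega, by rw [hxmod]; exact (h.2.1 x (by simp)).2⟩
    · exact ih (memD_tail h) y hy

lemma memR_unstretch {a b k : ℕ} {m : List ℕ} (h : memD a b k m) :
    memR a b k (unstretch k m) := by
  have hc := unstretch_chain h
  haveI : Trans (fun p q : ℕ => q ≤ p ∧ (p % k = b % k → q < p))
      (fun p q : ℕ => q ≤ p ∧ (p % k = b % k → q < p))
      (fun p q : ℕ => q ≤ p ∧ (p % k = b % k → q < p)) := ⟨by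
    intro p q r hpq hqr
    exact ⟨le_trans hqr.1 hpq.1, fun hb => lt_of_le_of_lt hqr.1 (hpq.2 hb)⟩⟩
  have hp : (unstretch k m).Pairwise (fun p q => q ≤ p ∧ (p % k = b % k → q < p)) :=
    List.isChain_iff_pairwise.mp hc
  refine ⟨hp.imp fun hpq => hpq.1, unstretch_elem h, ?_⟩
  intro z hz
  by_contra hcnt
  have hdup : List.Duplicate z (unstretch k m) :=
    List.duplicate_iff_two_le_count.mpr (by omega)
  have hsub := List.duplicate_iff_sublist.mp hdup
  have hpz := List.Pairwise.sublist hsub hp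
  rcases List.pairwise_cons.mp hpz with ⟨h1, _⟩
  exact absurd ((h1 z (by simp)).2 hz) (lt_irrefl z)

lemma stretch_unstretch {a b k : ℕ} {m : List ℕ} (h : memD a b k m) :
    stretch k (unstretch k m) = m := by
  induction m with
  | nil => rfl
  | cons x t ih =>
    rw [unstretch_cons, stretch_cons, unstretch_length, ih (memD_tail h)]
    have := memD_head h
    congr 1
    omega

lemma unstretch_stretch {a b k : ℕ} (hk : 0 < k) {l : List ℕ} (h : memR a b k l) :
    unstretch k (stretch k l) = l :=
  stretch_injective k (stretch_unstretch (memR_stretch hk h))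

/-- Adding `k(ℓ-1), k(ℓ-2), …, k, 0` to the parts is a bijection from `R_{a,b,k}(ℓ)` onto
`D_{a,b,k}(ℓ)` preserving `ℓ_a` and `ℓ_b` and increasing the weight by `k·C(ℓ,2)`;
consequently `Σ_{π ∈ D_{a,b,k}(ℓ)} u^{ℓ_a} v^{ℓ_b} q^{|π|}
  = q^{k C(ℓ,2)} Σ_{π ∈ R_{a,b,k}(ℓ)} u^{ℓ_a} v^{ℓ_b} q^{|π|}`. -/
theorem shift_R_to_D (a b k ℓ : ℕ) (ha : 1 ≤ a) (hab : a < b) (hbk : b ≤ k) :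
    Set.BijOn (stretch k) {l : List ℕ | memR a b k l ∧ l.length = ℓ}
      {l : List ℕ | memD a b k l ∧ l.length = ℓ}
    ∧ (∀ l : List ℕ, memR a b k l → l.length = ℓ →
        lcount k a (stretch k l) = lcount k a l ∧
        lcount k b (stretch k l) = lcount k b l ∧
        (stretch k l).sum = l.sum + k * Nat.choose ℓ 2)
    ∧ (∀ q u v : ℂ, ‖q‖ < 1 →
        ∑' π : {l : List ℕ // memD a b k l ∧ l.length = ℓ},
            u ^ lcount k a π.1 * v ^ lcount k b π.1 * q ^ π.1.sum
          = q ^ (k * Nat.choose ℓ 2) *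
            ∑' π : {l : List ℕ // memR a b k l ∧ l.length = ℓ},
              u ^ lcount k a π.1 * v ^ lcount k b π.1 * q ^ π.1.sum) := by
  have hk : 0 < k := by omega
  have hbij : Set.BijOn (stretch k) {l : List ℕ | memR a b k l ∧ l.length = ℓ}
      {l : List ℕ | memD a b k l ∧ l.length = ℓ} := by
    refine ⟨?_, ?_, ?_⟩
    · intro l hl
      exact ⟨memR_stretch hk hl.1, by rw [stretch_length]; exact hl.2⟩
    · exact fun l _ l' _ h => stretch_injective k h
    · intro m hm
      exact ⟨unstretch k m, ⟨memR_unstretch hm.1, by rw [unstretch_length]; exact hm.2⟩,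
        stretch_unstretch hm.1⟩
  refine ⟨hbij, ?_, ?_⟩
  · intro l _ hlen
    exact ⟨lcount_stretch k a l, lcount_stretch k b l, by rw [stretch_sum, hlen]⟩
  · intro q u v _
    let e : {l : List ℕ // memR a b k l ∧ l.length = ℓ} ≃
        {l : List ℕ // memD a b k l ∧ l.length = ℓ} :=
      { toFun := fun π => ⟨stretch k π.1,
          memR_stretch hk π.2.1, by rw [stretch_length]; exact π.2.2⟩
        invFun := fun π => ⟨unstretch k π.1,
          memR_unstretch π.2.1, by rw [unstretch_length]; exact π.2.2⟩
        left_inv := fun π => Subtype.ext (unstretch_stretch hk π.2.1)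
        right_inv := fun π => Subtype.ext (stretch_unstretch π.2.1) }
    calc ∑' π : {l : List ℕ // memD a b k l ∧ l.length = ℓ},
            u ^ lcount k a π.1 * v ^ lcount k b π.1 * q ^ π.1.sum
        = ∑' π : {l : List ℕ // memR a b k l ∧ l.length = ℓ},
            u ^ lcount k a (e π).1 * v ^ lcount k b (e π).1 * q ^ (e π).1.sum :=
          (Equiv.tsum_eq e _).symm
      _ = ∑' π : {l : List ℕ // memR a b k l ∧ l.length = ℓ},
            q ^ (k * Nat.choose ℓ 2) *
              (u ^ lcount k a π.1 * v ^ lcount k b π.1 * q ^ π.1.sum) := by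
          apply tsum_congr
          intro π
          show u ^ lcount k a (stretch k π.1) * v ^ lcount k b (stretch k π.1) *
              q ^ (stretch k π.1).sum = _
          rw [lcount_stretch, lcount_stretch, stretch_sum, π.2.2, pow_add]
          ring
      _ = _ := tsum_mul_left
end

section
/- For integers a, b, k with k ≥ b > a ≥ 1, m ≥ 1 and 0 ≤ h ≤ m−1: Σ_{λ ∈ BR_{a,b,k}(m,h,a)} u^{ℓ_a(λ)} v^{ℓ_b(λ)} q^{|λ|} = u^{m−h} v^{h} q^{ma + k·C(h+1,2) + (b−a)h} [m−1 choose h]_k, and Σ_{λ ∈ BR_{a,b,k}(m,h,b)} u^{ℓ_a(λ)} v^{ℓ_b(λ)} q^{|λ|} = u^{m−h−1} v^{h+1} q^{ma + k·C(h+1,2) + (b−a)(h+1)} [m−1 choose h]_k. -/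
lemma qPoch_succ (t : ℂ) (n : ℕ) : qPoch t t (n + 1) = qPoch t t n * (1 - t ^ (n + 1)) := by
  rw [qPoch, Finset.prod_range_succ, ← qPoch, ← pow_succ']

lemma qPoch_ne_zero {t : ℂ} (ht : ‖t‖ < 1) (n : ℕ) : qPoch t t n ≠ 0 := by
  rw [qPoch]
  apply Finset.prod_ne_zero_iff.2
  intro i _
  rw [sub_ne_zero, ← pow_succ']
  intro h
  have : ‖t ^ (i + 1)‖ < 1 := by
    rw [norm_pow]
    exact pow_lt_one₀ (norm_nonneg t) ht (Nat.succ_ne_zero i)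
  rw [← h] at this
  simp at this

noncomputable def fsum (t : ℂ) (n h : ℕ) : ℂ :=
  ∑ S ∈ Finset.powersetCard h (Finset.range n), ∏ s ∈ S, t ^ (s + 1)

lemma fsum_zero (t : ℂ) (n : ℕ) : fsum t n 0 = 1 := by
  simp [fsum]

lemma fsum_of_gt (t : ℂ) {n h : ℕ} (h1 : n < h) : fsum t n h = 0 := by
  rw [fsum, Finset.powersetCard_eq_empty.2 (by simpa using h1)]
  simp

lemma pow_choose_succ (t : ℂ) (h : ℕ) :
    t ^ Nat.choose (h + 1 + 1) 2 = t ^ Nat.choose (h + 1) 2 * t ^ (h + 1) := by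
  rw [Nat.choose_succ_succ, Nat.choose_one_right, pow_add]
  ring

lemma fsum_succ (t : ℂ) (n h : ℕ) :
    fsum t (n + 1) (h + 1) = fsum t n (h + 1) + t ^ (n + 1) * fsum t n h := by
  have hni : (n : ℕ) ∉ Finset.range n := by simp
  rw [fsum, Finset.range_add_one, Finset.powersetCard_succ_insert hni]
  rw [Finset.sum_union]
  · congr 1
    rw [Finset.sum_image (fun S hS T hT hST => by
      have hns : n ∉ S := fun hn => hni ((Finset.mem_powersetCard.1 hS).1 hn)
      have hnt : n ∉ T := fun hn => hni ((Finset.mem_powersetCard.1 hT).1 hn)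
      rw [← Finset.erase_insert hns, ← Finset.erase_insert hnt, hST])]
    rw [fsum, Finset.mul_sum]
    apply Finset.sum_congr rfl
    intro S hS
    have hns : n ∉ S := fun hn => hni ((Finset.mem_powersetCard.1 hS).1 hn)
    rw [Finset.prod_insert hns]
  · rw [Finset.disjoint_left]
    intro S hS hS'
    obtain ⟨T, hT, rfl⟩ := Finset.mem_image.1 hS'
    exact hni ((Finset.mem_powersetCard.1 hS).1 (Finset.mem_insert_self n T))

lemma key_identity (t : ℂ) : ∀ n h : ℕ,
    fsum t n h * (qPoch t t h * qPoch t t (n - h)) =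
      (if h ≤ n then t ^ Nat.choose (h + 1) 2 else 0) * qPoch t t n := by
  intro n
  induction n with
  | zero =>
    intro h
    cases h with
    | zero => simp [fsum_zero, qPoch]
    | succ h => rw [fsum_of_gt t (Nat.succ_pos h), if_neg (by omega)]; ring
  | succ n ih =>
    intro h
    cases h with
    | zero =>
      simp [fsum_zero, qPoch]
    | succ h =>
      rw [fsum_succ]
      by_cases hn : h + 1 ≤ n + 1
      · rw [if_pos hn]
        have hhn : h ≤ n := by omega
        by_cases hstrict : h + 1 ≤ n
        · -- general case
          have e1 := ih (h + 1)
          rw [if_pos hstrict, pow_choose_succ, qPoch_succ t h] at e1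
          have e2 := ih h
          rw [if_pos hhn, show n - h = (n - (h+1)) + 1 by omega, qPoch_succ t (n - (h+1))] at e2
          have hXY : t ^ (n + 1) = t ^ (h + 1) * t ^ (n - (h+1) + 1) := by
            rw [← pow_add]; congr 1; omega
          rw [show n + 1 - (h + 1) = (n - (h+1)) + 1 by omega, pow_choose_succ,
            qPoch_succ t h, qPoch_succ t (n - (h+1)), qPoch_succ t n, hXY]
          linear_combination (1 - t ^ (n - (h+1) + 1)) * e1
            + t ^ (h + 1) * t ^ (n - (h+1) + 1) * (1 - t ^ (h + 1)) * e2
        · -- h = n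
          have hne : h = n := by omega
          subst hne
          have e2 := ih h
          rw [if_pos le_rfl, Nat.sub_self] at e2
          rw [fsum_of_gt t (Nat.lt_succ_self h), Nat.sub_self, pow_choose_succ,
            qPoch_succ t h]
          linear_combination t ^ (h + 1) * (1 - t ^ (h + 1)) * e2
      · rw [if_neg hn, fsum_of_gt t (show n < h + 1 by omega), fsum_of_gt t (show n < h by omega)]
        ring

/-- Membership in `BR_{a,b,k}(m)`: partitions `(λ_1,…,λ_m)` with exactly `m` parts, each
`≡ a` or `b (mod k)`, only parts `≡ a (mod k)` possibly repeated, `λ_m ∈ {a, b}`, and for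
consecutive parts `λ_i - λ_{i+1} ≤ k` with strict inequality if `λ_{i+1} ≡ a (mod k)`. -/
def memBR (a b k m : ℕ) (l : List ℕ) : Prop :=
  l.Pairwise (· ≥ ·) ∧ l.length = m ∧
    (∀ x ∈ l, 0 < x ∧ (x % k = a % k ∨ x % k = b % k)) ∧
    (∀ x : ℕ, x % k = b % k → l.count x ≤ 1) ∧
    (l.getLast? = some a ∨ l.getLast? = some b) ∧
    l.Chain' (fun x y => x ≤ y + k ∧ (y % k = a % k → x < y + k))



section BR

variable {a b k : ℕ}

def brMu (S : Finset ℕ) (i : ℕ) : ℕ := (S.filter fun s => i ≤ s).card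

def brR (a b c : ℕ) (S : Finset ℕ) (i : ℕ) : ℕ :=
  if i = 0 then c else if i - 1 ∈ S then b else a

def brF (a b k c m : ℕ) (S : Finset ℕ) : List ℕ :=
  List.ofFn fun i : Fin m => k * brMu S i.val + brR a b c S i.val

lemma brMu_succ (S : Finset ℕ) (i : ℕ) :
    brMu S i = brMu S (i + 1) + (if i ∈ S then 1 else 0) := by
  unfold brMu
  have h1 : S.filter (fun s => i ≤ s) = S.filter (fun s => i + 1 ≤ s) ∪ S.filter (fun s => s = i) := by
    ext s
    simp only [Finset.mem_union, Finset.mem_filter]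
    constructor
    · rintro ⟨hs, hle⟩
      rcases eq_or_lt_of_le hle with rfl | hlt
      · exact Or.inr ⟨hs, rfl⟩
      · exact Or.inl ⟨hs, hlt⟩
    · rintro (⟨hs, hle⟩ | ⟨hs, rfl⟩)
      · exact ⟨hs, by omega⟩
      · exact ⟨hs, le_refl _⟩
  have h2 : Disjoint (S.filter (fun s => i + 1 ≤ s)) (S.filter (fun s => s = i)) := by
    rw [Finset.disjoint_left]
    intro s hs hs'
    simp only [Finset.mem_filter] at hs hs'
    omega
  rw [h1, Finset.card_union_of_disjoint h2, Finset.filter_eq' S i]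
  congr 1
  split_ifs <;> simp

lemma brMu_zero_of_ge {S : Finset ℕ} {n : ℕ} (hS : S ⊆ Finset.range n) {i : ℕ}
    (hi : n ≤ i) : brMu S i = 0 := by
  rw [brMu, Finset.card_eq_zero, Finset.filter_eq_empty_iff]
  intro s hs
  have := Finset.mem_range.1 (hS hs)
  omega

lemma brMu_zero (S : Finset ℕ) : brMu S 0 = S.card := by
  simp [brMu]

lemma brMu_le (S : Finset ℕ) (i : ℕ) : brMu S i ≤ S.card :=
  Finset.card_le_card (Finset.filter_subset _ _)



lemma bridges (k p u : ℕ) :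
    (p ≤ u ∧ k*p ≤ k*u ∨ (u+1 ≤ p ∧ k*u + k ≤ k*p)) ∧
    (p ≤ u+1 ∧ k*p ≤ k*u + k ∨ (u+2 ≤ p ∧ k*u + 2*k ≤ k*p)) ∧
    (u ≤ p ∧ k*u ≤ k*p ∨ (p+1 ≤ u ∧ k*p + k ≤ k*u)) := by
  refine ⟨?_, ?_, ?_⟩
  · rcases le_or_gt p u with h|h
    · exact Or.inl ⟨h, Nat.mul_le_mul_left k h⟩
    · exact Or.inr ⟨h, by have := Nat.mul_le_mul_left k h; nlinarith⟩
  · rcases le_or_gt p (u+1) with h|h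
    · exact Or.inl ⟨h, by have := Nat.mul_le_mul_left k h; nlinarith⟩
    · exact Or.inr ⟨h, by have := Nat.mul_le_mul_left k h; nlinarith⟩
  · rcases le_or_gt u p with h|h
    · exact Or.inl ⟨h, Nat.mul_le_mul_left k h⟩
    · exact Or.inr ⟨h, by have := Nat.mul_le_mul_left k h; nlinarith⟩

lemma pair_forward {p u rx ry : ℕ} (ha : 1 ≤ a) (hab : a < b) (hbk : b ≤ k)
    (hrx : rx = a ∨ rx = b) (hry : ry = a ∨ ry = b)
    (hge : k*u + ry ≤ k*p + rx) (hle : k*p + rx ≤ k*u + ry + k)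
    (hstricta : ry = a → k*p + rx < k*u + ry + k)
    (hneb : rx = b → ry = b → k*p + rx ≠ k*u + ry) :
    p = u + (if ry = b then 1 else 0) := by
  obtain ⟨h1, h2, h3⟩ := bridges k p u
  rcases hry with h|h
  · rw [if_neg (by omega)]
    have hs := hstricta h
    rcases hrx with h'|h' <;> omega
  · rw [if_pos h]
    rcases hrx with h'|h'
    · omega
    · have := hneb h' h
      omega

lemma pair_backward {p u rx ry : ℕ} (ha : 1 ≤ a) (hab : a < b) (hbk : b ≤ k)
    (hrx : rx = a ∨ rx = b) (hry : ry = a ∨ ry = b)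
    (hp : p = u + (if ry = b then 1 else 0)) :
    k*u + ry ≤ k*p + rx ∧ k*p + rx ≤ k*u + ry + k ∧
      (ry = a → k*p + rx < k*u + ry + k) ∧
      (k*u + ry < k*p + rx ∨ (k*p + rx = k*u + ry ∧ rx = a)) := by
  rcases hry with h|h
  · rw [if_neg (by omega), Nat.add_zero] at hp
    subst hp
    rcases hrx with h'|h' <;> omega
  · rw [if_pos h] at hp
    subst hp
    have : k*(u+1) = k*u + k := by ring
    rcases hrx with h'|h' <;> omega

lemma amodk (hab : a < b) (hbk : b ≤ k) : a % k = a := Nat.mod_eq_of_lt (by omega)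

lemma abmodk (ha : 1 ≤ a) (hab : a < b) (hbk : b ≤ k) : a % k ≠ b % k := by
  rw [amodk hab hbk]
  rcases eq_or_lt_of_le hbk with rfl | hlt
  · rw [Nat.mod_self]; omega
  · rw [Nat.mod_eq_of_lt hlt]; omega

def Rb (k a : ℕ) (x y : ℕ) : Prop := y < x ∨ (x = y ∧ x % k = a % k)

lemma brR_or {c : ℕ} (hc : c = a ∨ c = b) (S : Finset ℕ) (i : ℕ) :
    brR a b c S i = a ∨ brR a b c S i = b := by
  unfold brR; split_ifs <;> tauto

lemma brR_succ (c : ℕ) (S : Finset ℕ) (i : ℕ) :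
    brR a b c S (i + 1) = if i ∈ S then b else a := by
  simp [brR]

lemma brF_adj (ha : 1 ≤ a) (hab : a < b) (hbk : b ≤ k) {S : Finset ℕ} {c : ℕ}
    (hc : c = a ∨ c = b) (i : ℕ) :
    brMu S i = brMu S (i+1) + (if brR a b c S (i+1) = b then 1 else 0) := by
  rw [brMu_succ S i, brR_succ]
  congr 1
  split_ifs with h1 h2 <;> first | rfl | omega

lemma brF_getElem (a b k c m : ℕ) (S : Finset ℕ) (i : ℕ) (h : i < (brF a b k c m S).length) :
    (brF a b k c m S)[i] = k * brMu S i + brR a b c S i := by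
  simp [brF, List.getElem_ofFn]

lemma brF_memBR (ha : 1 ≤ a) (hab : a < b) (hbk : b ≤ k) {m : ℕ} (hm : 1 ≤ m)
    {S : Finset ℕ} (hS : S ⊆ Finset.range (m - 1)) {c : ℕ} (hc : c = a ∨ c = b) :
    memBR a b k m (brF a b k c m S) ∧ (brF a b k c m S).head? = some (k * S.card + c) := by
  have hk1 : 1 ≤ k := by omega
  have hne := abmodk ha hab hbk
  have hlen : (brF a b k c m S).length = m := List.length_ofFn
  have hnil : brF a b k c m S ≠ [] := by
    apply List.ne_nil_of_length_pos
    rw [hlen]; omega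
  have hmod : ∀ i : ℕ, (k * brMu S i + brR a b c S i) % k = brR a b c S i % k := by
    intro i; exact Nat.mul_add_mod k _ _
  have hadj : ∀ i : ℕ, i + 1 < m →
      (k * brMu S (i+1) + brR a b c S (i+1) ≤ k * brMu S i + brR a b c S i ∧
       k * brMu S i + brR a b c S i ≤ k * brMu S (i+1) + brR a b c S (i+1) + k ∧
       (brR a b c S (i+1) = a → k * brMu S i + brR a b c S i < k * brMu S (i+1) + brR a b c S (i+1) + k) ∧
       (k * brMu S (i+1) + brR a b c S (i+1) < k * brMu S i + brR a b c S i ∨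
         (k * brMu S i + brR a b c S i = k * brMu S (i+1) + brR a b c S (i+1) ∧ brR a b c S i = a))) := by
    intro i hi
    exact pair_backward ha hab hbk (brR_or hc S i) (brR_or hc S (i+1)) (brF_adj ha hab hbk hc i)
  have hchainRb : (brF a b k c m S).Chain' (Rb k a) := by
    refine List.isChain_iff_getElem.mpr ?_
    intro i hi
    rw [hlen] at hi
    rw [brF_getElem, brF_getElem]
    obtain ⟨h1, h2, h3, h4⟩ := hadj i (by omega)
    rcases h4 with h4 | ⟨h4, h5⟩
    · exact Or.inl h4
    · refine Or.inr ⟨h4, ?_⟩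
      rw [hmod i, h5]
  haveI : IsTrans ℕ (Rb k a) := ⟨by
    rintro x y z (h|⟨rfl,h⟩) (h'|⟨rfl,h'⟩)
    · exact Or.inl (h'.trans h)
    · exact Or.inl h
    · exact Or.inl h'
    · exact Or.inr ⟨rfl, h⟩⟩
  have hPW : (brF a b k c m S).Pairwise (Rb k a) := List.isChain_iff_pairwise.mp hchainRb
  refine ⟨⟨?_, hlen, ?_, ?_, ?_, ?_⟩, ?_⟩
  · -- sorted
    exact hPW.imp (fun h => by rcases h with h | ⟨rfl, _⟩ <;> omega)
  · -- parts
    intro x hx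
    rw [List.mem_iff_getElem] at hx
    obtain ⟨i, hilt, rfl⟩ := hx
    rw [brF_getElem]
    constructor
    · rcases brR_or hc S i with h | h <;> omega
    · rw [hmod i]
      rcases brR_or hc S i with h | h <;> rw [h] <;> tauto
  · -- count
    intro x hx
    by_contra hcount
    push_neg at hcount
    have hdup : (brF a b k c m S).Duplicate x := List.duplicate_iff_two_le_count.mpr hcount
    have hpw2 : List.Pairwise (Rb k a) [x, x] :=
      List.Pairwise.sublist (List.duplicate_iff_sublist.mp hdup) hPW
    rw [List.pairwise_cons] at hpw2
    have hrel : Rb k a x x := hpw2.1 x (by simp)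
    rcases hrel with h | ⟨_, h⟩
    · omega
    · rw [hx] at h; exact hne h.symm
  · -- getLast
    rw [List.getLast?_eq_getLast_of_ne_nil hnil, List.getLast_eq_getElem]
    rw [brF_getElem, hlen]
    have h0 : brMu S (m - 1) = 0 := brMu_zero_of_ge hS (le_refl _)
    rw [h0, Nat.mul_zero, Nat.zero_add]
    rcases brR_or hc S (m - 1) with h | h <;> rw [h] <;> tauto
  · -- chain
    refine List.isChain_iff_getElem.mpr ?_
    intro i hi
    rw [hlen] at hi
    rw [brF_getElem, brF_getElem]
    obtain ⟨h1, h2, h3, h4⟩ := hadj i (by omega)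
    refine ⟨h2, fun hy => ?_⟩
    rcases brR_or hc S (i+1) with h | h
    · exact h3 h
    · exfalso
      rw [hmod (i+1), h] at hy
      exact hne hy.symm
  · -- head
    rw [List.head?_eq_head hnil, List.head_eq_getElem]
    rw [brF_getElem, brMu_zero]
    rfl

lemma brF_inj (ha : 1 ≤ a) (hab : a < b) (hbk : b ≤ k) {m : ℕ} (hm : 1 ≤ m)
    {S T : Finset ℕ} (hS : S ⊆ Finset.range (m - 1)) (hT : T ⊆ Finset.range (m - 1))
    {c : ℕ} (heq : brF a b k c m S = brF a b k c m T) : S = T := by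
  have hne := abmodk ha hab hbk
  ext i
  by_cases hi : i < m - 1
  · have h1 : i + 1 < (brF a b k c m S).length := by
      have : (brF a b k c m S).length = m := List.length_ofFn
      omega
    have h2 : i + 1 < (brF a b k c m T).length := by
      have : (brF a b k c m T).length = m := List.length_ofFn
      omega
    have e : (brF a b k c m S)[i+1] = (brF a b k c m T)[i+1] := by
      congr 1
    rw [brF_getElem, brF_getElem] at e
    have emod := congrArg (· % k) e
    simp only [Nat.mul_add_mod] at emod
    rw [brR_succ, brR_succ] at emod
    constructor
    · intro hiS
      rw [if_pos hiS] at emod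
      by_contra hiT
      rw [if_neg hiT] at emod
      exact hne emod.symm
    · intro hiT
      rw [if_pos hiT] at emod
      by_contra hiS
      rw [if_neg hiS] at emod
      exact hne emod
  · constructor
    · intro hiS; exact absurd (Finset.mem_range.1 (hS hiS)) hi
    · intro hiT; exact absurd (Finset.mem_range.1 (hT hiT)) hi

lemma length_filter_eq_sum_map {α : Type*} (l : List α) (p : α → Bool) :
    (l.filter p).length = (l.map (fun x => if p x then (1:ℕ) else 0)).sum := by
  induction l with
  | nil => simp
  | cons x l ih =>
    rw [List.filter_cons, List.map_cons, List.sum_cons]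
    split_ifs with hx
    · rw [List.length_cons, ih]; omega
    · rw [ih]; omega


lemma lcount_brF (r : ℕ) (c : ℕ) (S : Finset ℕ) (m : ℕ) :
    lcount k r (brF a b k c m S) =
      ∑ i ∈ Finset.range m, (if brR a b c S i % k = r % k then 1 else 0) := by
  rw [lcount, length_filter_eq_sum_map, brF, List.map_ofFn, List.sum_ofFn,
    ← Fin.sum_univ_eq_sum_range (fun i => if brR a b c S i % k = r % k then (1:ℕ) else 0) m]
  apply Finset.sum_congr rfl
  intro i _
  simp [Nat.mul_add_mod]

lemma sum_indicator_mem {S : Finset ℕ} {n : ℕ} (hS : S ⊆ Finset.range n) :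
    ∑ i ∈ Finset.range n, (if i ∈ S then (1:ℕ) else 0) = S.card := by
  rw [Finset.sum_ite_mem, Finset.inter_eq_right.2 hS]
  simp

lemma lcount_b_brF (ha : 1 ≤ a) (hab : a < b) (hbk : b ≤ k) {m : ℕ} (hm : 1 ≤ m)
    {S : Finset ℕ} (hS : S ⊆ Finset.range (m - 1)) {c : ℕ} (hc : c = a ∨ c = b) :
    lcount k b (brF a b k c m S) = S.card + (if c = b then 1 else 0) := by
  have hne := abmodk ha hab hbk
  rw [lcount_brF]
  have hm' : m = (m - 1) + 1 := by omega
  rw [hm', Finset.sum_range_succ']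
  have e0 : (if brR a b c S 0 % k = b % k then (1:ℕ) else 0) = (if c = b then 1 else 0) := by
    have : brR a b c S 0 = c := by unfold brR; simp
    rw [this]
    rcases hc with rfl | rfl
    · rw [if_neg hne, if_neg (by omega)]
    · rw [if_pos rfl, if_pos rfl]
  rw [e0]
  congr 1
  have : ∀ i ∈ Finset.range (m - 1),
      (if brR a b c S (i + 1) % k = b % k then (1:ℕ) else 0) = (if i ∈ S then 1 else 0) := by
    intro i _
    rw [brR_succ]
    split_ifs with h1 h2 h3 <;> first | rfl | (exfalso; first | exact h2 rfl | exact hne h3)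
  rw [Finset.sum_congr rfl this, sum_indicator_mem hS]

lemma lcount_a_brF (ha : 1 ≤ a) (hab : a < b) (hbk : b ≤ k) {m : ℕ} (hm : 1 ≤ m)
    {S : Finset ℕ} (hS : S ⊆ Finset.range (m - 1)) {c : ℕ} (hc : c = a ∨ c = b) :
    lcount k a (brF a b k c m S) = m - (S.card + (if c = b then 1 else 0)) := by
  have hne := abmodk ha hab hbk
  have hcard : S.card ≤ m - 1 := by
    have := Finset.card_le_card hS
    simpa using this
  have hsum : lcount k a (brF a b k c m S) + lcount k b (brF a b k c m S) = m := by
    rw [lcount_brF, lcount_brF, ← Finset.sum_add_distrib]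
    have : ∀ i ∈ Finset.range m,
        ((if brR a b c S i % k = a % k then (1:ℕ) else 0) +
          (if brR a b c S i % k = b % k then 1 else 0)) = 1 := by
      intro i _
      rcases brR_or hc S i with h | h <;> rw [h]
      · rw [if_pos rfl, if_neg hne]
      · rw [if_neg (fun hh => hne hh.symm), if_pos rfl]
    rw [Finset.sum_congr rfl this]
    simp
  have hb := lcount_b_brF ha hab hbk hm hS hc
  omega

lemma brMu_sum {m : ℕ} (hm : 1 ≤ m) {S : Finset ℕ} (hS : S ⊆ Finset.range (m - 1)) :
    ∑ i ∈ Finset.range m, brMu S i = ∑ s ∈ S, (s + 1) := by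
  unfold brMu
  have : ∀ i ∈ Finset.range m, (S.filter fun s => i ≤ s).card
      = ∑ s ∈ S, (if i ≤ s then (1:ℕ) else 0) := by
    intro i _
    rw [Finset.card_filter]
  rw [Finset.sum_congr rfl this, Finset.sum_comm]
  apply Finset.sum_congr rfl
  intro s hs
  have hsm : s + 1 ≤ m := by
    have := Finset.mem_range.1 (hS hs)
    omega
  have : Finset.range m = Finset.range (s+1) ∪ (Finset.range m \ Finset.range (s+1)) := by
    rw [Finset.union_sdiff_of_subset (Finset.range_subset_range.2 hsm)]
  rw [this, Finset.sum_union (Finset.disjoint_sdiff)]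
  have e1 : ∑ i ∈ Finset.range (s+1), (if i ≤ s then (1:ℕ) else 0) = s + 1 := by
    rw [Finset.sum_congr rfl (fun i hi => if_pos (by have := Finset.mem_range.1 hi; omega))]
    simp
  have e2 : ∑ i ∈ Finset.range m \ Finset.range (s+1), (if i ≤ s then (1:ℕ) else 0) = 0 := by
    apply Finset.sum_eq_zero
    intro i hi
    obtain ⟨-, h2⟩ := Finset.mem_sdiff.1 hi
    have h2' : ¬ i < s + 1 := fun hlt => h2 (Finset.mem_range.2 hlt)
    rw [if_neg (by omega)]
  rw [e1, e2]

lemma brF_sum (ha : 1 ≤ a) (hab : a < b) (hbk : b ≤ k) {m : ℕ} (hm : 1 ≤ m)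
    {S : Finset ℕ} (hS : S ⊆ Finset.range (m - 1)) {c : ℕ} (hc : c = a ∨ c = b) :
    (brF a b k c m S).sum
      = k * (∑ s ∈ S, (s + 1)) + ((m - 1) * a + (b - a) * S.card + c) := by
  have hsplit : (brF a b k c m S).sum = ∑ i ∈ Finset.range m, (k * brMu S i + brR a b c S i) := by
    rw [brF, List.sum_ofFn, ← Fin.sum_univ_eq_sum_range (fun i => k * brMu S i + brR a b c S i) m]
  rw [hsplit, Finset.sum_add_distrib, ← Finset.mul_sum, brMu_sum hm hS]
  congr 1
  have hm' : m = (m - 1) + 1 := by omega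
  rw [hm', Finset.sum_range_succ']
  have e0 : brR a b c S 0 = c := by unfold brR; simp
  rw [e0]
  congr 1
  have : ∀ i ∈ Finset.range (m - 1),
      brR a b c S (i + 1) = a + (if i ∈ S then b - a else 0) := by
    intro i _
    rw [brR_succ]
    split_ifs <;> omega
  rw [Finset.sum_congr rfl this, Finset.sum_add_distrib, Finset.sum_const,
    Finset.sum_ite_mem, Finset.inter_eq_right.2 hS, Finset.sum_const]
  simp [mul_comm]

lemma getD_eq (l : List ℕ) {i : ℕ} (h : i < l.length) : l.getD i 0 = l[i] := by
  rw [List.getD_eq_getElem?_getD, List.getElem?_eq_getElem h]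
  rfl

lemma decomp_res (ha : 1 ≤ a) (hab : a < b) (hbk : b ≤ k) {x : ℕ} (hx : 0 < x)
    (hmod : x % k = a % k ∨ x % k = b % k) :
    ∃ p, x = k * p + (if x % k = b % k then b else a) := by
  have hne := abmodk ha hab hbk
  rcases hmod with hA | hB
  · rw [if_neg (by rw [hA]; exact hne)]
    refine ⟨x / k, ?_⟩
    have h1 := Nat.div_add_mod x k
    rw [hA, amodk hab hbk] at h1
    omega
  · rw [if_pos hB]
    rcases eq_or_lt_of_le hbk with rfl | hlt
    · rw [Nat.mod_self] at hB
      obtain ⟨p, rfl⟩ := Nat.dvd_of_mod_eq_zero hB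
      rcases p with _ | p
      · simp at hx
      · exact ⟨p, by ring⟩
    · rw [Nat.mod_eq_of_lt hlt] at hB
      refine ⟨x / k, ?_⟩
      have h1 := Nat.div_add_mod x k
      omega

set_option maxHeartbeats 1600000 in
lemma brF_surj (ha : 1 ≤ a) (hab : a < b) (hbk : b ≤ k) {m : ℕ} (hm : 1 ≤ m)
    {c : ℕ} (hc : c = a ∨ c = b) {h : ℕ} {l : List ℕ}
    (hl : memBR a b k m l) (hhead : l.head? = some (k * h + c)) :
    ∃ S : Finset ℕ, S ⊆ Finset.range (m - 1) ∧ S.card = h ∧ brF a b k c m S = l := by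
  obtain ⟨hsort, hlen, hparts, hcount, hlast, hchain⟩ := hl
  have hk1 : 1 ≤ k := by omega
  have hne := abmodk ha hab hbk
  have hnil : l ≠ [] := List.ne_nil_of_length_pos (by omega)
  set S : Finset ℕ := (Finset.range (m-1)).filter (fun i => l.getD (i+1) 0 % k = b % k)
    with hSdef
  have hS : S ⊆ Finset.range (m-1) := Finset.filter_subset _ _
  have hmemS : ∀ i : ℕ, i ∈ S ↔ (i < m - 1 ∧ l.getD (i+1) 0 % k = b % k) := by
    intro i
    rw [hSdef, Finset.mem_filter, Finset.mem_range]
  have E : ∀ j, j < m → l.getD (m-1-j) 0 =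
      k * brMu S (m-1-j) + (if l.getD (m-1-j) 0 % k = b % k then b else a) := by
    intro j
    induction j with
    | zero =>
      intro _
      have hmm : m - 1 - 0 = m - 1 := by omega
      rw [hmm]
      have hlt : m - 1 < l.length := by omega
      rw [getD_eq l hlt]
      have hmu : brMu S (m-1) = 0 := brMu_zero_of_ge hS (le_refl _)
      have hlastval : l[m-1] = a ∨ l[m-1] = b := by
        rw [List.getLast?_eq_getLast_of_ne_nil hnil, List.getLast_eq_getElem] at hlast
        have hidx : l.length - 1 = m - 1 := by omega
        rcases hlast with hA | hB
        · left
          have := Option.some.inj hA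
          rw [← this]
          congr 1
          omega
        · right
          have := Option.some.inj hB
          rw [← this]
          congr 1
          omega
      rw [hmu, Nat.mul_zero, Nat.zero_add]
      rcases hlastval with hA | hB
      · rw [hA, if_neg (by rw [amodk hab hbk]; rw [amodk hab hbk] at hne; exact hne)]
      · rw [hB, if_pos rfl]
    | succ j ih =>
      intro hj
      set i := m - 1 - (j+1) with hidef
      have hi1 : i + 1 = m - 1 - j := by omega
      have him : i < m := by omega
      have hi1m : i + 1 < m := by omega
      have IH : l.getD (i+1) 0 = k * brMu S (i+1) +
          (if l.getD (i+1) 0 % k = b % k then b else a) := by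
        rw [hi1]
        exact ih (by omega)
      set ry := if l.getD (i+1) 0 % k = b % k then b else a with hrydef
      have hry : ry = a ∨ ry = b := by
        rw [hrydef]; split_ifs <;> tauto
      have hilen : i < l.length := by omega
      have hi1len : i + 1 < l.length := by omega
      have hxmem : l[i] ∈ l := List.getElem_mem hilen
      obtain ⟨hxpos, hxmod⟩ := hparts _ hxmem
      have hxg : l.getD i 0 = l[i] := getD_eq l hilen
      obtain ⟨p, hpx⟩ := decomp_res ha hab hbk (x := l[i]) hxpos hxmod
      set rx := if l[i] % k = b % k then b else a with hrxdef
      have hrx : rx = a ∨ rx = b := by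
        rw [hrxdef]; split_ifs <;> tauto
      -- sorted
      have hgel : l[i+1] ≤ l[i] :=
        (List.pairwise_iff_getElem.mp hsort) i (i+1) hilen hi1len (by omega)
      -- chain
      have hch := (List.isChain_iff_getElem.mp hchain) i (by omega)
      obtain ⟨hle2, hstrict2⟩ := hch
      -- translate
      have hyg : l.getD (i+1) 0 = l[i+1] := getD_eq l hi1len
      have hymod : l[i+1] % k = ry % k := by
        rw [← hyg, IH, Nat.mul_add_mod]
      have hpy : l[i+1] = k * brMu S (i+1) + ry := by
        rw [← hyg]
        exact IH
      have hge' : k * brMu S (i+1) + ry ≤ k * p + rx := by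
        rw [← hpy, ← hpx]
        exact hgel
      have hle' : k * p + rx ≤ k * brMu S (i+1) + ry + k := by
        rw [← hpx, ← hpy]
        exact hle2
      have hstricta : ry = a → k * p + rx < k * brMu S (i+1) + ry + k := by
        intro hrya
        have hcnd : l[i+1] % k = a % k := by rw [hymod, hrya, amodk hab hbk]
        have := hstrict2 hcnd
        rw [← hpx, ← hpy]
        exact this
      have hneb : rx = b → ry = b → k * p + rx ≠ k * brMu S (i+1) + ry := by
        intro hrxb hryb heqv
        have hxb : l[i] % k = b % k := by
          by_cases hcond : l[i] % k = b % k
          · exact hcond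
          · rw [hrxdef, if_neg hcond] at hrxb
            omega
        have hxy : l[i] = l[i+1] := by rw [hpx, hpy, heqv]
        have hdup : l.Duplicate l[i] := by
          rw [List.duplicate_iff_exists_distinct_get]
          refine ⟨⟨i, hilen⟩, ⟨i+1, hi1len⟩, by simp [Fin.mk_lt_mk], ?_, ?_⟩
          · simp [List.get_eq_getElem]
          · simp only [List.get_eq_getElem]
            exact hxy
        have := List.duplicate_iff_two_le_count.mp hdup
        have := hcount _ hxb
        omega
      have pf := pair_forward ha hab hbk hrx hry hge' hle' hstricta hneb
      have murel := brMu_succ S i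
      have hiS : (if i ∈ S then (1:ℕ) else 0) = (if ry = b then 1 else 0) := by
        rcases hry with hrya | hryb
        · have hr1 : ¬ ry = b := by rw [hrya]; omega
          have hr2 : i ∉ S := by
            intro himem
            have := (hmemS i).mp himem
            rw [getD_eq l hi1len, hymod, hrya] at this
            exact hne this.2
          rw [if_neg hr1, if_neg hr2]
        · have hr1 : i ∈ S := by
            apply (hmemS i).mpr
            refine ⟨by omega, ?_⟩
            rw [getD_eq l hi1len, hymod, hryb]
          rw [if_pos hryb, if_pos hr1]
      rw [hxg, ← hrxdef, hpx]
      have hpe : brMu S i = p := by omega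
      rw [hpe]
  -- conclude
  have h0len : 0 < l.length := by omega
  rw [List.head?_eq_head hnil, List.head_eq_getElem] at hhead
  have h0 : l[0] = k * h + c := Option.some.inj hhead
  have E0 := E (m-1) (by omega)
  rw [show m-1-(m-1) = 0 by omega, getD_eq l h0len] at E0
  have hr0 : (if l[0] % k = b % k then b else a) = c := by
    rw [h0, Nat.mul_add_mod]
    rcases hc with rfl | rfl
    · rw [if_neg hne]
    · rw [if_pos rfl]
  rw [hr0] at E0
  have hcard : S.card = h := by
    rw [← brMu_zero S]
    rw [h0] at E0
    have hkk : k * h = k * brMu S 0 := by omega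
    exact (Nat.eq_of_mul_eq_mul_left (by omega) hkk).symm
  refine ⟨S, hS, hcard, ?_⟩
  apply List.ext_getElem
  · have : (brF a b k c m S).length = m := List.length_ofFn
    omega
  · intro n h1 h2
    rw [brF_getElem]
    have hnm : n < m := by
      have : (brF a b k c m S).length = m := List.length_ofFn
      omega
    have En := E (m-1-n) (by omega)
    rw [show m-1-(m-1-n) = n by omega, getD_eq l (by omega)] at En
    by_cases hn0 : n = 0
    · subst hn0
      rw [hr0] at En
      rw [En]
      congr 1
    · have hbrR : brR a b c S n = if l[n] % k = b % k then b else a := by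
        unfold brR
        rw [if_neg hn0]
        by_cases hcond : l[n] % k = b % k
        · rw [if_pos hcond, if_pos]
          apply (hmemS (n-1)).mpr
          refine ⟨by omega, ?_⟩
          rw [show n-1+1 = n by omega, getD_eq l (by omega)]
          exact hcond
        · rw [if_neg hcond, if_neg]
          intro hmem
          have := (hmemS (n-1)).mp hmem
          rw [show n-1+1 = n by omega, getD_eq l (by omega)] at this
          exact hcond this.2
      rw [hbrR, ← En]

end BR

set_option maxHeartbeats 1600000 in
lemma master_BR (a b k m h : ℕ) (ha : 1 ≤ a) (hab : a < b) (hbk : b ≤ k)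
    (hm : 1 ≤ m) (hh : h ≤ m - 1) (q u v : ℂ) (hq : ‖q‖ < 1)
    (c : ℕ) (hc : c = a ∨ c = b) :
    ∑ᶠ l ∈ {l : List ℕ | memBR a b k m l ∧ l.head? = some (k * h + c)},
        u ^ lcount k a l * v ^ lcount k b l * q ^ l.sum
      = u ^ (m - (h + if c = b then 1 else 0)) * v ^ (h + if c = b then 1 else 0) *
          q ^ (m * a + k * Nat.choose (h + 1) 2 + (b - a) * (h + if c = b then 1 else 0)) *
          gbinom (q ^ k) (m - 1) h := by
  have hk1 : 1 ≤ k := by omega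
  have hqk : ‖q ^ k‖ < 1 := by
    rw [norm_pow]
    exact pow_lt_one₀ (norm_nonneg q) hq (by omega)
  have hset : {l : List ℕ | memBR a b k m l ∧ l.head? = some (k * h + c)} =
      ↑((Finset.powersetCard h (Finset.range (m-1))).image (brF a b k c m)) := by
    ext l
    simp only [Set.mem_setOf_eq, Finset.coe_image, Set.mem_image, Finset.mem_coe,
      Finset.mem_powersetCard]
    constructor
    · rintro ⟨hmem, hhead⟩
      obtain ⟨S, hsub, hcard, heq⟩ := brF_surj ha hab hbk hm hc hmem hhead
      exact ⟨S, ⟨hsub, hcard⟩, heq⟩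
    · rintro ⟨S, ⟨hsub, hcard⟩, rfl⟩
      obtain ⟨hmem, hhead⟩ := brF_memBR ha hab hbk hm hsub hc
      exact ⟨hmem, by rw [hhead, hcard]⟩
  rw [hset, finsum_mem_coe_finset]
  rw [Finset.sum_image (fun S hS T hT heq => brF_inj ha hab hbk hm
    (Finset.mem_powersetCard.1 hS).1 (Finset.mem_powersetCard.1 hT).1 heq)]
  have hterm : ∀ S ∈ Finset.powersetCard h (Finset.range (m-1)),
      u ^ lcount k a (brF a b k c m S) * v ^ lcount k b (brF a b k c m S) *
        q ^ (brF a b k c m S).sum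
      = (u ^ (m - (h + if c = b then 1 else 0)) * v ^ (h + if c = b then 1 else 0) *
          q ^ ((m - 1) * a + (b - a) * h + c)) * ∏ s ∈ S, (q ^ k) ^ (s + 1) := by
    intro S hS
    obtain ⟨hsub, hcard⟩ := Finset.mem_powersetCard.1 hS
    rw [lcount_a_brF ha hab hbk hm hsub hc, lcount_b_brF ha hab hbk hm hsub hc,
      brF_sum ha hab hbk hm hsub hc, hcard]
    rw [Finset.prod_pow_eq_pow_sum, ← pow_mul, pow_add]
    ring
  rw [Finset.sum_congr rfl hterm, ← Finset.mul_sum]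
  have hfs : (∑ S ∈ Finset.powersetCard h (Finset.range (m-1)), ∏ s ∈ S, (q ^ k) ^ (s + 1))
      = (q ^ k) ^ (Nat.choose (h + 1) 2) * gbinom (q ^ k) (m - 1) h := by
    have hkey := key_identity (q ^ k) (m - 1) h
    rw [if_pos hh, fsum] at hkey
    rw [gbinom, if_pos hh, ← mul_div_assoc,
      eq_div_iff (mul_ne_zero (qPoch_ne_zero hqk h) (qPoch_ne_zero hqk (m - 1 - h)))]
    exact hkey
  rw [hfs, ← pow_mul]
  have hexp : (m - 1) * a + (b - a) * h + c + k * Nat.choose (h + 1) 2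
      = m * a + k * Nat.choose (h + 1) 2 + (b - a) * (h + if c = b then 1 else 0) := by
    have hma : m * a = (m - 1) * a + a := by
      nth_rewrite 1 [show m = (m - 1) + 1 by omega]
      ring
    have h2 : (b - a) * (h + 1) = (b - a) * h + (b - a) := by ring
    rcases hc with h1 | h1
    · have hif : (h + if c = b then 1 else 0) = h := by
        rw [if_neg (show ¬ c = b by omega)]
        omega
      rw [hif]
      omega
    · have hif : (h + if c = b then 1 else 0) = h + 1 := by rw [if_pos h1]
      rw [hif]
      omega
  calc u ^ (m - (h + if c = b then 1 else 0)) * v ^ (h + if c = b then 1 else 0) *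
          q ^ ((m - 1) * a + (b - a) * h + c) *
          (q ^ (k * Nat.choose (h + 1) 2) * gbinom (q ^ k) (m - 1) h)
      = u ^ (m - (h + if c = b then 1 else 0)) * v ^ (h + if c = b then 1 else 0) *
          (q ^ ((m - 1) * a + (b - a) * h + c) * q ^ (k * Nat.choose (h + 1) 2)) *
          gbinom (q ^ k) (m - 1) h := by ring
    _ = _ := by rw [← pow_add, hexp]

/-- Generating functions for the partitions in `BR_{a,b,k}(m,h,a)` (largest part `kh+a`) and
`BR_{a,b,k}(m,h,b)` (largest part `kh+b`). -/
theorem gen_BR_mha (a b k m h : ℕ) (ha : 1 ≤ a) (hab : a < b) (hbk : b ≤ k)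
    (hm : 1 ≤ m) (hh : h ≤ m - 1) (q u v : ℂ) (hq : ‖q‖ < 1) :
    (∑ᶠ l ∈ {l : List ℕ | memBR a b k m l ∧ l.head? = some (k * h + a)},
        u ^ lcount k a l * v ^ lcount k b l * q ^ l.sum
      = u ^ (m - h) * v ^ h *
          q ^ (m * a + k * Nat.choose (h + 1) 2 + (b - a) * h) * gbinom (q ^ k) (m - 1) h)
    ∧ (∑ᶠ l ∈ {l : List ℕ | memBR a b k m l ∧ l.head? = some (k * h + b)},
        u ^ lcount k a l * v ^ lcount k b l * q ^ l.sum
      = u ^ (m - h - 1) * v ^ (h + 1) *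
          q ^ (m * a + k * Nat.choose (h + 1) 2 + (b - a) * (h + 1)) *
          gbinom (q ^ k) (m - 1) h) := by
  constructor
  · have := master_BR a b k m h ha hab hbk hm hh q u v hq a (Or.inl rfl)
    rw [if_neg (by omega)] at this
    simpa using this
  · have := master_BR a b k m h ha hab hbk hm hh q u v hq b (Or.inr rfl)
    rw [if_pos rfl] at this
    rw [this, Nat.sub_sub]
end
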